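/- arXiv:0809.4410 — 5 statements merged into one kernel-verified Lean document; each statement's English description precedes it below -/
import Mathlib

section
/- A coalgebra C is left quasi-coFrobenius if and only if every rational left C*-module (equivalently, every right C-comodule viewed as a left C*-module) embeds in a free left C*-module. -/
open TensorProduct

noncomputable section
namespace Paper

variable (k : Type) [Field k]
variable (C : Type) [AddCommGroup C] [Module k C] [Coalgebra k C]

/-- The convolution product on the dual algebra `C*`. -/
def conv (f g : Module.Dual k C) : Module.Dual k C :=
  (TensorProduct.lid k k).toLinearMap ∘ₗ TensorProduct.map f g ∘ₗ Coalgebra.comul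

variable {M : Type} [AddCommGroup M] [Module k M]

/-- The left `C*`-action `f ⇀ m = ∑ m₀ f(m₁)` on a right `C`-comodule `(M, ρ)`. -/
def dualAct (ρ : M →ₗ[k] M ⊗[k] C) (f : Module.Dual k C) : M →ₗ[k] M :=
  (TensorProduct.rid k M).toLinearMap ∘ₗ TensorProduct.map LinearMap.id f ∘ₗ ρ

/-- `ρ : M → M ⊗ C` is a right `C`-comodule structure. -/
structure IsRightComodule (ρ : M →ₗ[k] M ⊗[k] C) : Prop where
  coassoc : (TensorProduct.assoc k M C C).toLinearMap ∘ₗ (TensorProduct.map ρ LinearMap.id) ∘ₗ ρ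
      = (TensorProduct.map LinearMap.id Coalgebra.comul) ∘ₗ ρ
  counit : (TensorProduct.rid k M).toLinearMap
      ∘ₗ (TensorProduct.map LinearMap.id Coalgebra.counit) ∘ₗ ρ = LinearMap.id

/-- The right `C`-comodule `(M, ρ)` embeds, as a left `C*`-module, in a free left `C*`-module. -/
def EmbedsInFree (ρ : M →ₗ[k] M ⊗[k] C) : Prop :=
  ∃ (I : Type) (Φ : M →ₗ[k] (I →₀ Module.Dual k C)), Function.Injective Φ ∧
    ∀ (f : Module.Dual k C) (m : M) (i : I),
      Φ (dualAct k C ρ f m) i = conv k C f (Φ m i)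

/-- `C` is left quasi-coFrobenius. -/
def LeftQcF : Prop := EmbedsInFree k C (Coalgebra.comul : C →ₗ[k] C ⊗[k] C)

/-- `C` is left f-qcF : every finite dimensional right `C`-comodule embeds, as a left
`C*`-module, in a free left `C*`-module. -/
def LeftfQcF : Prop :=
  ∀ (M : Type) [AddCommGroup M] [Module k M] (ρ : M →ₗ[k] M ⊗[k] C),
    IsRightComodule k C ρ → FiniteDimensional k M → EmbedsInFree k C ρ

/-- `lam : M → C ⊗ M` is a left `C`-comodule structure. -/
structure IsLeftComodule (lam : M →ₗ[k] C ⊗[k] M) : Prop where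
  coassoc : (TensorProduct.map LinearMap.id lam) ∘ₗ lam
      = (TensorProduct.assoc k C C M).toLinearMap
          ∘ₗ (TensorProduct.map Coalgebra.comul LinearMap.id) ∘ₗ lam
  counit : (TensorProduct.lid k M).toLinearMap
      ∘ₗ (TensorProduct.map Coalgebra.counit LinearMap.id) ∘ₗ lam = LinearMap.id

/-- The left coaction on the free left comodule `C^(I)`. -/
def freeCoaction (I : Type) : (I →₀ C) →ₗ[k] C ⊗[k] (I →₀ C) :=
  Finsupp.lsum k fun i =>
    (TensorProduct.map LinearMap.id (Finsupp.lsingle i)) ∘ₗ Coalgebra.comul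

/-- `C` is a generator of the category of its left comodules: every left `C`-comodule is an
epimorphic image of a coproduct `C^(I)` of copies of `C`. -/
def IsGeneratorLeftComodules : Prop :=
  ∀ (X : Type) [AddCommGroup X] [Module k X] (lamX : X →ₗ[k] C ⊗[k] X),
    IsLeftComodule k C lamX →
    ∃ (I : Type) (φ : (I →₀ C) →ₗ[k] X), Function.Surjective φ ∧
      (TensorProduct.map LinearMap.id φ) ∘ₗ freeCoaction k C I = lamX ∘ₗ φ

/-- A submodule `N` of a right comodule `(M, ρ)` is a subcomodule if `ρ(N) ⊆ N ⊗ C`. -/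
def IsSubcomodule (ρ : M →ₗ[k] M ⊗[k] C) (N : Submodule k M) : Prop :=
  ∀ n ∈ N, ρ n ∈ LinearMap.range (TensorProduct.map N.subtype (LinearMap.id (M := C)))

/-- A right comodule is simple if it is nonzero and has no proper nonzero subcomodules. -/
def IsSimpleComodule (ρ : M →ₗ[k] M ⊗[k] C) : Prop :=
  Nontrivial M ∧ ∀ N : Submodule k M, IsSubcomodule k C ρ N → N = ⊥ ∨ N = ⊤

/-- A morphism of right `C`-comodules. -/
def IsComodHom {N : Type} [AddCommGroup N] [Module k N]
    (ρM : M →ₗ[k] M ⊗[k] C) (ρN : N →ₗ[k] N ⊗[k] C) (φ : M →ₗ[k] N) : Prop :=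
  (TensorProduct.map φ LinearMap.id) ∘ₗ ρM = ρN ∘ₗ φ

/-- `(E, ρE)` is an injective object in the category of right `C`-comodules. -/
def IsInjectiveComodule {E : Type} [AddCommGroup E] [Module k E]
    (ρE : E →ₗ[k] E ⊗[k] C) : Prop :=
  ∀ (X Y : Type) [AddCommGroup X] [Module k X] [AddCommGroup Y] [Module k Y]
    (ρX : X →ₗ[k] X ⊗[k] C) (ρY : Y →ₗ[k] Y ⊗[k] C),
    IsRightComodule k C ρX → IsRightComodule k C ρY →
    ∀ g : X →ₗ[k] Y, IsComodHom k C ρX ρY g → Function.Injective g →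
    ∀ f : X →ₗ[k] E, IsComodHom k C ρX ρE f →
      ∃ h : Y →ₗ[k] E, IsComodHom k C ρY ρE h ∧ h ∘ₗ g = f

/-- `ι : M → E` exhibits `(E, ρE)` as an injective envelope of the right comodule `(M, ρM)`. -/
def IsInjectiveEnvelope {E : Type} [AddCommGroup E] [Module k E]
    (ρM : M →ₗ[k] M ⊗[k] C) (ρE : E →ₗ[k] E ⊗[k] C) (ι : M →ₗ[k] E) : Prop :=
  IsComodHom k C ρM ρE ι ∧ Function.Injective ι ∧ IsInjectiveComodule k C ρE ∧
    ∀ N : Submodule k E, IsSubcomodule k C ρE N → N ≠ ⊥ → LinearMap.range ι ⊓ N ≠ ⊥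

/-- `C` is left semiperfect: the injective envelope of every simple right `C`-comodule is
finite dimensional. -/
def LeftSemiperfect : Prop :=
  ∀ (M : Type) [AddCommGroup M] [Module k M] (ρM : M →ₗ[k] M ⊗[k] C),
    IsRightComodule k C ρM → IsSimpleComodule k C ρM →
    ∃ (E : Type) (_ : AddCommGroup E) (_ : Module k E)
      (ρE : E →ₗ[k] E ⊗[k] C) (ι : M →ₗ[k] E),
      IsRightComodule k C ρE ∧ IsInjectiveEnvelope k C ρM ρE ι ∧ FiniteDimensional k E

/-- A right coideal of `C`: a subspace `N` with `Δ(N) ⊆ N ⊗ C`. -/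
def IsRightCoideal (N : Submodule k C) : Prop :=
  ∀ x ∈ N, Coalgebra.comul (R := k) x ∈
    LinearMap.range (TensorProduct.map N.subtype (LinearMap.id (M := C)))

/-- The right coideal `N ⊆ C` embeds, as a left `C*`-module, in a free left `C*`-module. -/
def CoidealEmbedsInFree (N : Submodule k C) : Prop :=
  ∃ (J : Type) (Φ : N →ₗ[k] (J →₀ Module.Dual k C)), Function.Injective Φ ∧
    ∀ (f : Module.Dual k C) (x : C) (hx : x ∈ N)
      (hfx : dualAct k C (Coalgebra.comul (R := k)) f x ∈ N) (j : J),
      Φ ⟨dualAct k C (Coalgebra.comul (R := k)) f x, hfx⟩ j = conv k C f (Φ ⟨x, hx⟩ j)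

end Paper

section Stmt2Aux

open Paper

variable (k : Type) [Field k]
variable (C : Type) [AddCommGroup C] [Module k C] [Coalgebra k C]
variable {M : Type} [AddCommGroup M] [Module k M]

lemma comul_isRightComodule :
    Paper.IsRightComodule k C (Coalgebra.comul : C →ₗ[k] C ⊗[k] C) := by
  constructor
  · exact Coalgebra.coassoc
  · ext a
    have h := Coalgebra.lTensor_counit_comul (R := k) a
    simp only [LinearMap.comp_apply, LinearMap.id_apply, LinearEquiv.coe_coe]
    rw [show (TensorProduct.map (LinearMap.id (M := C)) (Coalgebra.counit (R := k)))
        = (Coalgebra.counit (R := k)).lTensor C from rfl, h]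
    simp

lemma dualAct_key {ρ : M →ₗ[k] M ⊗[k] C} (hρ : Paper.IsRightComodule k C ρ)
    (f : Module.Dual k C) :
    ρ ∘ₗ Paper.dualAct k C ρ f
      = TensorProduct.map LinearMap.id (Paper.dualAct k C Coalgebra.comul f) ∘ₗ ρ := by
  have h1 : ρ ∘ₗ (TensorProduct.rid k M).toLinearMap ∘ₗ TensorProduct.map LinearMap.id f
      = (TensorProduct.rid k (M ⊗[k] C)).toLinearMap
          ∘ₗ TensorProduct.map LinearMap.id f ∘ₗ TensorProduct.map ρ LinearMap.id := by
    apply TensorProduct.ext'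
    intro m c
    simp [TensorProduct.smul_tmul']
  have h0 : (TensorProduct.rid k (M ⊗[k] C)).toLinearMap
        ∘ₗ TensorProduct.map LinearMap.id f
      = TensorProduct.map LinearMap.id
            ((TensorProduct.rid k C).toLinearMap ∘ₗ TensorProduct.map LinearMap.id f)
          ∘ₗ (TensorProduct.assoc k M C C).toLinearMap := by
    apply TensorProduct.ext_threefold
    intro m c d
    simp [TensorProduct.smul_tmul', TensorProduct.tmul_smul]
  have hmapcomp : TensorProduct.map (LinearMap.id (M := M))
        ((TensorProduct.rid k C).toLinearMap ∘ₗ TensorProduct.map LinearMap.id f)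
      ∘ₗ TensorProduct.map LinearMap.id Coalgebra.comul
      = TensorProduct.map LinearMap.id (Paper.dualAct k C Coalgebra.comul f) := by
    rw [← TensorProduct.map_comp]
    rfl
  calc ρ ∘ₗ Paper.dualAct k C ρ f
      = (ρ ∘ₗ (TensorProduct.rid k M).toLinearMap ∘ₗ TensorProduct.map LinearMap.id f) ∘ₗ ρ := by
        simp only [Paper.dualAct, LinearMap.comp_assoc]
    _ = ((TensorProduct.rid k (M ⊗[k] C)).toLinearMap
          ∘ₗ TensorProduct.map LinearMap.id f ∘ₗ TensorProduct.map ρ LinearMap.id) ∘ₗ ρ := by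
        rw [h1]
    _ = ((TensorProduct.rid k (M ⊗[k] C)).toLinearMap ∘ₗ TensorProduct.map LinearMap.id f)
          ∘ₗ TensorProduct.map ρ LinearMap.id ∘ₗ ρ := by
        simp only [LinearMap.comp_assoc]
    _ = TensorProduct.map LinearMap.id
            ((TensorProduct.rid k C).toLinearMap ∘ₗ TensorProduct.map LinearMap.id f)
          ∘ₗ (TensorProduct.assoc k M C C).toLinearMap
          ∘ₗ TensorProduct.map ρ LinearMap.id ∘ₗ ρ := by
        rw [h0]; simp only [LinearMap.comp_assoc]
    _ = TensorProduct.map LinearMap.id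
            ((TensorProduct.rid k C).toLinearMap ∘ₗ TensorProduct.map LinearMap.id f)
          ∘ₗ TensorProduct.map LinearMap.id Coalgebra.comul ∘ₗ ρ := by
        rw [hρ.coassoc]
    _ = TensorProduct.map LinearMap.id (Paper.dualAct k C Coalgebra.comul f) ∘ₗ ρ := by
        rw [← LinearMap.comp_assoc, hmapcomp]

lemma rho_injective {ρ : M →ₗ[k] M ⊗[k] C} (hρ : Paper.IsRightComodule k C ρ) :
    Function.Injective ρ := by
  intro x y hxy
  have := LinearMap.congr_fun hρ.counit x
  have h2 := LinearMap.congr_fun hρ.counit y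
  simp only [LinearMap.comp_apply, LinearMap.id_apply] at this h2
  rw [← this, ← h2, hxy]

end Stmt2Aux


/-- `C` is left quasi-coFrobenius iff every rational left `C*`-module
(equivalently, every right `C`-comodule viewed as a left `C*`-module via
`f ⇀ m = ∑ m₀ f(m₁)`) embeds in a free left `C*`-module. -/

theorem stmt2 (k : Type) [Field k] (C : Type) [AddCommGroup C] [Module k C] [Coalgebra k C] :
    Paper.LeftQcF k C ↔
      ∀ (M : Type) [AddCommGroup M] [Module k M] (ρ : M →ₗ[k] M ⊗[k] C),
        Paper.IsRightComodule k C ρ → Paper.EmbedsInFree k C ρ := by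
  constructor
  · intro hQ M _ _ ρ hρ
    obtain ⟨I, Φ, hΦinj, hΦ⟩ := hQ
    classical
    set S := Module.Basis.ofVectorSpaceIndex k M with hS
    let b : Module.Basis S k M := Module.Basis.ofVectorSpace k M
    let E : M ⊗[k] C ≃ₗ[k] (S →₀ C) :=
      (TensorProduct.congr b.repr (LinearEquiv.refl k C)).trans
        (TensorProduct.finsuppScalarLeft k C S)
    have hE : ∀ (m : M) (c : C) (s : S), E (m ⊗ₜ[k] c) s = b.repr m s • c := by
      intro m c s
      simp [E, TensorProduct.finsuppScalarLeft_apply_tmul_apply]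
    have hEcomm : ∀ (h : C →ₗ[k] C) (t : M ⊗[k] C) (s : S),
        E (TensorProduct.map LinearMap.id h t) s = h (E t s) := by
      intro h t s
      induction t using TensorProduct.induction_on with
      | zero => simp
      | tmul m c => simp [hE]
      | add x y hx hy => simp [map_add, hx, hy, Finsupp.add_apply]
    let Φ' : M →ₗ[k] (S × I →₀ Module.Dual k C) :=
      (Finsupp.curryLinearEquiv k).symm.toLinearMap
        ∘ₗ Finsupp.mapRange.linearMap Φ ∘ₗ E.toLinearMap ∘ₗ ρ
    have hΦ'apply : ∀ (m : M) (j : S × I),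
        Φ' m j = Φ (E (ρ m) j.1) j.2 := by
      intro m j
      simp [Φ', Finsupp.curryLinearEquiv_symm_apply_apply, Finsupp.uncurry_apply, Finsupp.mapRange.linearMap_apply,
        Finsupp.mapRange_apply]
    refine ⟨S × I, Φ', ?_, ?_⟩
    · intro x y hxy
      apply rho_injective k C hρ
      apply E.injective
      ext s
      apply hΦinj
      refine Finsupp.ext fun i => ?_
      have := congrArg (fun g => g (s, i)) hxy
      simpa [hΦ'apply] using this
    · intro f m j
      have hk := LinearMap.congr_fun (dualAct_key k C hρ f) m
      simp only [LinearMap.comp_apply] at hk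
      rw [hΦ'apply, hk, hEcomm, hΦ, ← hΦ'apply]
  · intro h
    exact h C Coalgebra.comul (comul_isRightComodule k C)
end
end

section
/- A coalgebra C is a generator of the category of its left comodules if and only if every finite dimensional right C-comodule embeds, as a left C*-module, in a free left C*-module. -/
open TensorProduct

noncomputable section
set_option linter.unusedSectionVars false

namespace Paper

section Tools

variable {k : Type} [Field k]
variable {V W V' W' : Type} [AddCommGroup V] [Module k V] [AddCommGroup W] [Module k W]
  [AddCommGroup V'] [Module k V'] [AddCommGroup W'] [Module k W']

/-- Apply a functional to the left factor of a tensor product. -/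
def lap (f : Module.Dual k V) : V ⊗[k] W →ₗ[k] W :=
  (TensorProduct.lid k W).toLinearMap ∘ₗ LinearMap.rTensor W f

/-- Apply a functional to the right factor of a tensor product. -/
def rap (g : Module.Dual k W) : V ⊗[k] W →ₗ[k] V :=
  (TensorProduct.rid k V).toLinearMap ∘ₗ LinearMap.lTensor V g

/-- Pairing of a tensor product with a pair of functionals. -/
def dpair (f : Module.Dual k V) (g : Module.Dual k W) : V ⊗[k] W →ₗ[k] k :=
  (TensorProduct.lid k k).toLinearMap ∘ₗ TensorProduct.map f g

@[simp] lemma lap_tmul (f : Module.Dual k V) (v : V) (w : W) :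
    lap f (v ⊗ₜ[k] w) = f v • w := by
  simp [lap]

@[simp] lemma rap_tmul (g : Module.Dual k W) (v : V) (w : W) :
    rap g (v ⊗ₜ[k] w) = g w • v := by
  simp [rap]

@[simp] lemma dpair_tmul (f : Module.Dual k V) (g : Module.Dual k W) (v : V) (w : W) :
    dpair f g (v ⊗ₜ[k] w) = f v * g w := by
  simp [dpair, smul_eq_mul]

lemma lap_lTensor (f : Module.Dual k V) (u : W →ₗ[k] W') (x : V ⊗[k] W) :
    lap f (LinearMap.lTensor V u x) = u (lap f x) :=
  LinearMap.congr_fun (TensorProduct.ext' (fun v w => by simp) :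
    (lap f) ∘ₗ LinearMap.lTensor V u = u ∘ₗ lap f) x

lemma lap_rTensor (f : Module.Dual k V) (u : V' →ₗ[k] V) (x : V' ⊗[k] W) :
    lap f (LinearMap.rTensor W u x) = lap (f ∘ₗ u) x :=
  LinearMap.congr_fun (TensorProduct.ext' (fun v w => by simp) :
    (lap f) ∘ₗ LinearMap.rTensor W u = lap (f ∘ₗ u)) x

lemma rap_rTensor (g : Module.Dual k W) (u : V →ₗ[k] V') (x : V ⊗[k] W) :
    rap g (LinearMap.rTensor W u x) = u (rap g x) :=
  LinearMap.congr_fun (TensorProduct.ext' (fun v w => by simp) :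
    (rap g) ∘ₗ LinearMap.rTensor W u = u ∘ₗ rap g) x

lemma rap_lTensor (g : Module.Dual k W) (u : W' →ₗ[k] W) (x : V ⊗[k] W') :
    rap g (LinearMap.lTensor V u x) = rap (g ∘ₗ u) x :=
  LinearMap.congr_fun (TensorProduct.ext' (fun v w => by simp) :
    (rap g) ∘ₗ LinearMap.lTensor V u = rap (g ∘ₗ u)) x

lemma applied_rap (f : Module.Dual k V) (g : Module.Dual k W) (x : V ⊗[k] W) :
    f (rap g x) = dpair f g x :=
  LinearMap.congr_fun (TensorProduct.ext' (fun v w => by simp [mul_comm]) :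
    f ∘ₗ rap g = dpair f g) x

lemma applied_lap (f : Module.Dual k V) (g : Module.Dual k W) (x : V ⊗[k] W) :
    g (lap f x) = dpair f g x :=
  LinearMap.congr_fun (TensorProduct.ext' (fun v w => by simp [mul_comm]) :
    g ∘ₗ lap f = dpair f g) x

/-- `rap` twice after unassociating computes the `dpair` on the right factor. -/
lemma rap_rap_assoc_symm {W₁ W₂ : Type} [AddCommGroup W₁] [Module k W₁]
    [AddCommGroup W₂] [Module k W₂] (f : Module.Dual k W₁) (g : Module.Dual k W₂)
    (x : V ⊗[k] (W₁ ⊗[k] W₂)) :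
    rap f (rap g ((TensorProduct.assoc k V W₁ W₂).symm x)) = rap (dpair f g) x := by
  have : ((rap f).comp ((rap g).comp (TensorProduct.assoc k V W₁ W₂).symm.toLinearMap))
      = rap (dpair f g) := by
    apply TensorProduct.ext'
    intro v y
    refine y.induction_on (by simp) (fun w₁ w₂ => ?_) (fun a b ha hb => ?_)
    · simp [smul_smul, mul_comm]
    · simp only [tmul_add, map_add, ha, hb]
  exact LinearMap.congr_fun this x

/-- `lap` twice after associating computes the `dpair` on the left factor. -/
lemma lap_lap_assoc {V₁ V₂ : Type} [AddCommGroup V₁] [Module k V₁]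
    [AddCommGroup V₂] [Module k V₂] (f : Module.Dual k V₁) (g : Module.Dual k V₂)
    (y : (V₁ ⊗[k] V₂) ⊗[k] W) :
    lap g (lap f ((TensorProduct.assoc k V₁ V₂ W) y)) = lap (dpair f g) y := by
  have : ((lap g).comp ((lap f).comp (TensorProduct.assoc k V₁ V₂ W).toLinearMap))
      = lap (dpair f g) := by
    apply TensorProduct.ext_threefold
    intro v₁ v₂ w
    simp [smul_smul, mul_comm]
  exact LinearMap.congr_fun this y

open scoped Classical in
/-- Basis-coordinate isomorphism `V ⊗ W ≃ (ι →₀ V)` from a basis of `W`. -/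
def rcoord {ι : Type} (b : Module.Basis ι k W) : V ⊗[k] W ≃ₗ[k] (ι →₀ V) :=
  (TensorProduct.congr (LinearEquiv.refl k V) b.repr).trans
    (TensorProduct.finsuppScalarRight k k V ι)

@[simp] lemma rcoord_tmul {ι : Type} (b : Module.Basis ι k W) (v : V) (w : W) (i : ι) :
    rcoord b (v ⊗ₜ[k] w) i = b.repr w i • v := by
  simp [rcoord]

lemma rcoord_eq_rap {ι : Type} (b : Module.Basis ι k W) (x : V ⊗[k] W) (i : ι) :
    rcoord b x i = rap (b.coord i) x := by
  have : (Finsupp.lapply i ∘ₗ (rcoord b (V := V)).toLinearMap) = rap (b.coord i) := by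
    apply TensorProduct.ext'
    intro v w
    simp
  exact LinearMap.congr_fun this x

lemma sep_right (x y : V ⊗[k] W) (h : ∀ g : Module.Dual k W, rap g x = rap g y) : x = y := by
  let b := Module.Basis.ofVectorSpace k W
  apply (rcoord (V := V) b).injective
  ext i
  rw [rcoord_eq_rap, rcoord_eq_rap]
  exact h _

open scoped Classical in
/-- Basis-coordinate isomorphism `V ⊗ W ≃ (ι →₀ W)` from a basis of `V`. -/
def lcoord {ι : Type} (b : Module.Basis ι k V) : V ⊗[k] W ≃ₗ[k] (ι →₀ W) :=
  (TensorProduct.congr b.repr (LinearEquiv.refl k W)).trans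
    (TensorProduct.finsuppScalarLeft k W ι)

@[simp] lemma lcoord_tmul {ι : Type} (b : Module.Basis ι k V) (v : V) (w : W) (i : ι) :
    lcoord b (v ⊗ₜ[k] w) i = b.repr v i • w := by
  simp [lcoord]

lemma lcoord_eq_lap {ι : Type} (b : Module.Basis ι k V) (x : V ⊗[k] W) (i : ι) :
    lcoord b x i = lap (b.coord i) x := by
  have : (Finsupp.lapply i ∘ₗ (lcoord b (W := W)).toLinearMap) = lap (b.coord i) := by
    apply TensorProduct.ext'
    intro v w
    simp
  exact LinearMap.congr_fun this x

lemma sep_left (x y : V ⊗[k] W) (h : ∀ f : Module.Dual k V, lap f x = lap f y) : x = y := by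
  let b := Module.Basis.ofVectorSpace k V
  apply (lcoord (W := W) b).injective
  ext i
  rw [lcoord_eq_lap, lcoord_eq_lap]
  exact h _

lemma sep_dpair (x y : V ⊗[k] W)
    (h : ∀ (f : Module.Dual k V) (g : Module.Dual k W), dpair f g x = dpair f g y) : x = y := by
  apply sep_left
  intro f
  rw [← sub_eq_zero, ← (Module.forall_dual_apply_eq_zero_iff k (lap f x - lap f y))]
  intro g
  simp only [map_sub, applied_lap, h f g, sub_self]

lemma sep_rpair {W₁ W₂ : Type} [AddCommGroup W₁] [Module k W₁] [AddCommGroup W₂] [Module k W₂]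
    (x y : V ⊗[k] (W₁ ⊗[k] W₂))
    (h : ∀ (f : Module.Dual k W₁) (g : Module.Dual k W₂),
      rap (dpair f g) x = rap (dpair f g) y) : x = y := by
  have h2 : (TensorProduct.assoc k V W₁ W₂).symm x = (TensorProduct.assoc k V W₁ W₂).symm y := by
    apply sep_right
    intro g
    apply sep_right
    intro f
    rw [rap_rap_assoc_symm, rap_rap_assoc_symm]
    exact h f g
  exact (TensorProduct.assoc k V W₁ W₂).symm.injective h2
end Tools


section Main

variable {k : Type} [Field k]
variable {C : Type} [AddCommGroup C] [Module k C] [Coalgebra k C]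

local notation "Δ" => (Coalgebra.comul : C →ₗ[k] C ⊗[k] C)
local notation "ε" => (Coalgebra.counit : C →ₗ[k] k)

section ActFacts
variable {M : Type} [AddCommGroup M] [Module k M]

set_option linter.unusedSectionVars false in
lemma dualAct_apply (ρ : M →ₗ[k] M ⊗[k] C) (f : Module.Dual k C) (m : M) :
    dualAct k C ρ f m = rap f (ρ m) := rfl

lemma conv_apply' (f g : Module.Dual k C) (c : C) :
    conv k C f g c = dpair f g (Δ c) := rfl

/-- The `C*`-action on a right comodule is an action of the convolution algebra. -/
lemma dualAct_dualAct {ρ : M →ₗ[k] M ⊗[k] C} (hρ : IsRightComodule k C ρ)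
    (f g : Module.Dual k C) (m : M) :
    dualAct k C ρ f (dualAct k C ρ g m) = dualAct k C ρ (conv k C f g) m := by
  have hco : (TensorProduct.assoc k M C C) (LinearMap.rTensor C ρ (ρ m))
      = LinearMap.lTensor M Δ (ρ m) := LinearMap.congr_fun hρ.coassoc m
  have h1 : LinearMap.rTensor C ρ (ρ m)
      = (TensorProduct.assoc k M C C).symm (LinearMap.lTensor M Δ (ρ m)) := by
    rw [← hco, LinearEquiv.symm_apply_apply]
  rw [dualAct_apply, dualAct_apply, dualAct_apply]
  rw [show ρ (rap g (ρ m)) = rap g (LinearMap.rTensor C ρ (ρ m)) from (rap_rTensor g ρ (ρ m)).symm]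
  rw [h1, rap_rap_assoc_symm, rap_lTensor]
  rfl

lemma dualAct_counit {ρ : M →ₗ[k] M ⊗[k] C} (hρ : IsRightComodule k C ρ) (m : M) :
    dualAct k C ρ (ε) m = m := LinearMap.congr_fun hρ.counit m

end ActFacts

section DualComod

lemma rap_dpair_assoc {V W₁ W₂ : Type} [AddCommGroup V] [Module k V] [AddCommGroup W₁]
    [Module k W₁] [AddCommGroup W₂] [Module k W₂]
    (f : Module.Dual k W₁) (g : Module.Dual k W₂) (y : (V ⊗[k] W₁) ⊗[k] W₂) :
    rap (dpair f g) (TensorProduct.assoc k V W₁ W₂ y) = rap f (rap g y) := by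
  rw [← rap_rap_assoc_symm, LinearEquiv.symm_apply_apply]

section Right

variable {M : Type} [AddCommGroup M] [Module k M] [FiniteDimensional k M]

/-- `C ⊗ M* ≃ Hom(M, C)` for finite dimensional `M`. -/
def eCM : C ⊗[k] Module.Dual k M ≃ₗ[k] (M →ₗ[k] C) :=
  (TensorProduct.comm k C (Module.Dual k M)).trans (dualTensorHomEquiv k M C)

lemma eCM_tmul (c : C) (β : Module.Dual k M) (m : M) :
    eCM (c ⊗ₜ[k] β) m = β m • c := by
  simp [eCM]

/-- The left `C`-comodule structure on the dual of a finite dimensional right comodule. -/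
def dualCoaction (ρ : M →ₗ[k] M ⊗[k] C) :
    Module.Dual k M →ₗ[k] C ⊗[k] Module.Dual k M where
  toFun α := eCM.symm ((lap α) ∘ₗ ρ)
  map_add' α β := by
    show eCM.symm (lap (α + β) ∘ₗ ρ) = eCM.symm (lap α ∘ₗ ρ) + eCM.symm (lap β ∘ₗ ρ)
    have h : (lap (α + β) : M ⊗[k] C →ₗ[k] C) = lap α + lap β := by
      unfold lap; rw [LinearMap.rTensor_add, LinearMap.comp_add]
    rw [h, LinearMap.add_comp, map_add]
  map_smul' a α := by
    show eCM.symm (lap (a • α) ∘ₗ ρ) = a • eCM.symm (lap α ∘ₗ ρ)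
    have h : (lap (a • α) : M ⊗[k] C →ₗ[k] C) = a • lap α := by
      unfold lap; rw [LinearMap.rTensor_smul, LinearMap.comp_smul]
    rw [h, LinearMap.smul_comp, map_smul]

lemma eCM_pair (f : Module.Dual k C) (m : M) (x : C ⊗[k] Module.Dual k M) :
    dpair f (Module.Dual.eval k M m) x = f (eCM x m) := by
  refine x.induction_on (by simp) (fun c β => ?_) (fun a b ha hb => ?_)
  · rw [dpair_tmul, eCM_tmul]
    simp [mul_comm]
  · simp only [map_add, LinearMap.add_apply, ha, hb]

lemma lap_apply_eq_dpair {W : Type} [AddCommGroup W] [Module k W]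
    (h : Module.Dual k W) (x : W ⊗[k] Module.Dual k M) (m : M) :
    (rap (Module.Dual.eval k M m) x) = 0 → True := fun _ => trivial

lemma lapD_apply (h : Module.Dual k C) (x : C ⊗[k] Module.Dual k M) (m : M) :
    (lap h x) m = dpair h (Module.Dual.eval k M m) x := by
  rw [← applied_lap]
  simp

lemma dpair_eval_dualCoaction (ρ : M →ₗ[k] M ⊗[k] C) (f : Module.Dual k C) (m : M)
    (α : Module.Dual k M) :
    dpair f (Module.Dual.eval k M m) (dualCoaction ρ α) = α (dualAct k C ρ f m) := by
  rw [eCM_pair]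
  have h1 : eCM (dualCoaction ρ α) = (lap α) ∘ₗ ρ := by
    show eCM (eCM.symm _) = _
    rw [LinearEquiv.apply_symm_apply]
  rw [h1]
  show f (lap α (ρ m)) = α (dualAct k C ρ f m)
  rw [applied_lap, dualAct_apply, applied_rap]

theorem dualCoaction_isLeftComodule {ρ : M →ₗ[k] M ⊗[k] C} (hρ : IsRightComodule k C ρ) :
    IsLeftComodule k C (dualCoaction ρ) := by
  constructor
  · apply LinearMap.ext; intro α
    simp only [LinearMap.coe_comp, Function.comp_apply, LinearEquiv.coe_coe]
    apply sep_left (V := C) (W := C ⊗[k] Module.Dual k M); intro f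
    apply sep_left (V := C) (W := Module.Dual k M); intro g
    apply LinearMap.ext; intro m
    have lhs :
        lap g (lap f ((TensorProduct.map LinearMap.id (dualCoaction ρ)) (dualCoaction ρ α))) m
          = α (dualAct k C ρ f (dualAct k C ρ g m)) := by
      rw [show (TensorProduct.map LinearMap.id (dualCoaction ρ)) (dualCoaction ρ α)
          = LinearMap.lTensor C (dualCoaction ρ) (dualCoaction ρ α) from rfl]
      rw [lap_lTensor, lapD_apply, dpair_eval_dualCoaction, lapD_apply,
        dpair_eval_dualCoaction]
    have rhs :
        lap g (lap f ((TensorProduct.assoc k C C (Module.Dual k M))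
            ((TensorProduct.map Δ LinearMap.id) (dualCoaction ρ α)))) m
          = α (dualAct k C ρ (conv k C f g) m) := by
      rw [lap_lap_assoc]
      rw [show (TensorProduct.map Δ LinearMap.id) (dualCoaction ρ α)
          = LinearMap.rTensor (Module.Dual k M) Δ (dualCoaction ρ α) from rfl]
      rw [lap_rTensor, show (dpair f g ∘ₗ Δ : Module.Dual k C) = conv k C f g from rfl,
        lapD_apply, dpair_eval_dualCoaction]
    rw [lhs, rhs, dualAct_dualAct hρ]
  · apply LinearMap.ext; intro α
    apply LinearMap.ext; intro m
    show (lap ε (dualCoaction ρ α)) m = α m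
    rw [lapD_apply, dpair_eval_dualCoaction, dualAct_counit hρ]

end Right

section Left

variable {N : Type} [AddCommGroup N] [Module k N] [FiniteDimensional k N]

/-- The action of `f ∈ C*` on a left comodule, `n ↦ ∑ f(n₋₁) n₀`. -/
def leftAct (lam : N →ₗ[k] C ⊗[k] N) (f : Module.Dual k C) : N →ₗ[k] N :=
  (lap f) ∘ₗ lam

/-- The right `C`-comodule structure on the dual of a finite dimensional left comodule. -/
def dualCoactionR (lam : N →ₗ[k] C ⊗[k] N) :
    Module.Dual k N →ₗ[k] Module.Dual k N ⊗[k] C where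
  toFun α := (dualTensorHomEquiv k N C).symm ((rap α) ∘ₗ lam)
  map_add' α β := by
    show (dualTensorHomEquiv k N C).symm (rap (α + β) ∘ₗ lam)
        = (dualTensorHomEquiv k N C).symm (rap α ∘ₗ lam)
          + (dualTensorHomEquiv k N C).symm (rap β ∘ₗ lam)
    have h : (rap (α + β) : C ⊗[k] N →ₗ[k] C) = rap α + rap β := by
      unfold rap; rw [LinearMap.lTensor_add, LinearMap.comp_add]
    rw [h, LinearMap.add_comp, map_add]
  map_smul' a α := by
    show (dualTensorHomEquiv k N C).symm (rap (a • α) ∘ₗ lam)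
        = a • (dualTensorHomEquiv k N C).symm (rap α ∘ₗ lam)
    have h : (rap (a • α) : C ⊗[k] N →ₗ[k] C) = a • rap α := by
      unfold rap; rw [LinearMap.lTensor_smul, LinearMap.comp_smul]
    rw [h, LinearMap.smul_comp, map_smul]

lemma eNC_pair (f : Module.Dual k C) (n : N) (x : Module.Dual k N ⊗[k] C) :
    dpair (Module.Dual.eval k N n) f x = f (dualTensorHomEquiv k N C x n) := by
  refine x.induction_on (by simp) (fun β c => ?_) (fun a b ha hb => ?_)
  · simp
  · simp only [map_add, LinearMap.add_apply, ha, hb]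

lemma rapD_apply (h : Module.Dual k C) (x : Module.Dual k N ⊗[k] C) (n : N) :
    (rap h x) n = dpair (Module.Dual.eval k N n) h x := by
  rw [← applied_rap]
  simp

lemma dpair_eval_dualCoactionR (lam : N →ₗ[k] C ⊗[k] N) (f : Module.Dual k C) (n : N)
    (α : Module.Dual k N) :
    dpair (Module.Dual.eval k N n) f (dualCoactionR lam α) = α (leftAct lam f n) := by
  rw [eNC_pair]
  have h1 : dualTensorHomEquiv k N C (dualCoactionR lam α) = (rap α) ∘ₗ lam := by
    show (dualTensorHomEquiv k N C) ((dualTensorHomEquiv k N C).symm _) = _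
    rw [LinearEquiv.apply_symm_apply]
  rw [h1]
  show f (rap α (lam n)) = α (leftAct lam f n)
  rw [applied_rap]
  show dpair f α (lam n) = α (lap f (lam n))
  rw [applied_lap]

lemma leftAct_leftAct {lam : N →ₗ[k] C ⊗[k] N} (hlam : IsLeftComodule k C lam)
    (f g : Module.Dual k C) (n : N) :
    leftAct lam g (leftAct lam f n) = leftAct lam (conv k C f g) n := by
  show lap g (lam (lap f (lam n))) = lap (conv k C f g) (lam n)
  rw [show lam (lap f (lam n)) = lap f (LinearMap.lTensor C lam (lam n)) from
    (lap_lTensor f lam (lam n)).symm]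
  have hco : LinearMap.lTensor C lam (lam n)
      = (TensorProduct.assoc k C C N) (LinearMap.rTensor N Δ (lam n)) :=
    LinearMap.congr_fun hlam.coassoc n
  rw [hco, lap_lap_assoc, lap_rTensor]
  rfl

theorem dualCoactionR_isRightComodule {lam : N →ₗ[k] C ⊗[k] N}
    (hlam : IsLeftComodule k C lam) :
    IsRightComodule k C (dualCoactionR lam) := by
  constructor
  · apply LinearMap.ext; intro α
    simp only [LinearMap.coe_comp, Function.comp_apply, LinearEquiv.coe_coe]
    apply sep_rpair (V := Module.Dual k N) (W₁ := C) (W₂ := C); intro f g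
    apply LinearMap.ext; intro n
    have lhs : rap (dpair f g) ((TensorProduct.assoc k (Module.Dual k N) C C)
        ((TensorProduct.map (dualCoactionR lam) LinearMap.id) (dualCoactionR lam α))) n
          = α (leftAct lam g (leftAct lam f n)) := by
      rw [rap_dpair_assoc]
      rw [show (TensorProduct.map (dualCoactionR lam) LinearMap.id) (dualCoactionR lam α)
          = LinearMap.rTensor C (dualCoactionR lam) (dualCoactionR lam α) from rfl]
      rw [rap_rTensor, rapD_apply, dpair_eval_dualCoactionR, rapD_apply,
        dpair_eval_dualCoactionR]
    have rhs : rap (dpair f g)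
        ((TensorProduct.map LinearMap.id Δ) (dualCoactionR lam α)) n
          = α (leftAct lam (conv k C f g) n) := by
      rw [show (TensorProduct.map LinearMap.id Δ) (dualCoactionR lam α)
          = LinearMap.lTensor (Module.Dual k N) Δ (dualCoactionR lam α) from rfl]
      rw [rap_lTensor, show (dpair f g ∘ₗ Δ : Module.Dual k C) = conv k C f g from rfl,
        rapD_apply, dpair_eval_dualCoactionR]
    rw [lhs, rhs, leftAct_leftAct hlam]
  · apply LinearMap.ext; intro α
    apply LinearMap.ext; intro n
    show (rap ε (dualCoactionR lam α)) n = α n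
    rw [rapD_apply, dpair_eval_dualCoactionR]
    have : leftAct lam (ε) n = n := LinearMap.congr_fun hlam.counit n
    rw [this]

end Left

end DualComod

section Subcomodule

variable {W W' : Type} [AddCommGroup W] [Module k W] [AddCommGroup W'] [Module k W']

variable {ι : Type} (b : Module.Basis ι k C)

lemma lcoord_lTensor (u : W →ₗ[k] W') (x : C ⊗[k] W) (i : ι) :
    lcoord b (LinearMap.lTensor C u x) i = u (lcoord b x i) := by
  have : (Finsupp.lapply i ∘ₗ (lcoord b (W := W')).toLinearMap ∘ₗ LinearMap.lTensor C u)
      = u ∘ₗ Finsupp.lapply i ∘ₗ (lcoord b (W := W)).toLinearMap := by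
    apply TensorProduct.ext'
    intro c w
    simp
  exact LinearMap.congr_fun this x

lemma lcoord_symm_single (i : ι) (w : W) :
    (lcoord b (W := W)).symm (Finsupp.single i w) = b i ⊗ₜ[k] w := by
  classical
  have h : lcoord b (b i ⊗ₜ[k] w) = Finsupp.single i w := by
    ext j
    rw [lcoord_tmul, Module.Basis.repr_self, Finsupp.single_apply, Finsupp.single_apply]
    split <;> simp
  rw [← h, LinearEquiv.symm_apply_apply]

lemma lap_eq_sum_coords (f : Module.Dual k C) (x : C ⊗[k] W) :
    lap f x = (lcoord b x).sum fun i w => f (b i) • w := by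
  have h : (lap f) ∘ₗ ((lcoord b (W := W)).symm : (ι →₀ W) →ₗ[k] C ⊗[k] W)
      = Finsupp.lsum k fun i => f (b i) • (LinearMap.id : W →ₗ[k] W) := by
    apply Finsupp.lhom_ext
    intro i w
    simp [lcoord_symm_single]
  have h2 : lap f x = (lap f) ((lcoord b (W := W)).symm (lcoord b x)) := by
    rw [LinearEquiv.symm_apply_apply]
  have h3 := LinearMap.congr_fun h ((lcoord b) x)
  simp only [LinearMap.coe_comp, Function.comp_apply, LinearEquiv.coe_coe] at h3
  rw [h2, h3, Finsupp.lsum_apply]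
  rfl

lemma rTensor_mem_range_of_coords (S : Submodule k W) (u : C →ₗ[k] C) (t : C ⊗[k] W)
    (h : ∀ i, lcoord b t i ∈ S) :
    LinearMap.rTensor W u t ∈ LinearMap.range (LinearMap.lTensor C S.subtype) := by
  have ht : t = ((lcoord b (W := W)).symm (lcoord b t)) := (LinearEquiv.symm_apply_apply _ _).symm
  rw [ht, ← Finsupp.sum_single (lcoord b t), map_finsuppSum, map_finsuppSum]
  apply Submodule.finsuppSum_mem
  intro i _
  rw [lcoord_symm_single]
  exact ⟨u (b i) ⊗ₜ[k] (⟨lcoord b t i, h i⟩ : S), by simp⟩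

lemma lcoord_assoc_rTensor (u : C ⊗[k] W) : True := trivial

lemma lcoord_assoc_comul (t : C ⊗[k] W) (γ : ι) :
    lcoord b ((TensorProduct.assoc k C C W) (LinearMap.rTensor W Δ t)) γ
      = LinearMap.rTensor W ((lap (b.coord γ)) ∘ₗ Δ) t := by
  have key : ∀ (c : C) (w : W),
      lcoord b ((TensorProduct.assoc k C C W) ((Δ c) ⊗ₜ[k] w)) γ
        = (lap (b.coord γ) (Δ c)) ⊗ₜ[k] w := by
    intro c w
    generalize (Δ c : C ⊗[k] C) = s
    refine s.induction_on (by simp) (fun c₁ c₂ => ?_) (fun a b' ha hb => ?_)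
    · simp [TensorProduct.assoc_tmul, smul_tmul']
    · rw [add_tmul, map_add, map_add, Finsupp.add_apply, ha, hb, map_add, add_tmul]
  have : (Finsupp.lapply γ ∘ₗ (lcoord b (W := C ⊗[k] W)).toLinearMap
        ∘ₗ (TensorProduct.assoc k C C W).toLinearMap ∘ₗ LinearMap.rTensor W Δ)
      = LinearMap.rTensor W ((lap (b.coord γ)) ∘ₗ Δ) := by
    apply TensorProduct.ext'
    intro c w
    simpa using key c w
  exact LinearMap.congr_fun this t

variable {X : Type} [AddCommGroup X] [Module k X]

/-- Every element of a left comodule lies in a finite dimensional subcomodule. -/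
theorem exists_findim_subcomodule {lamX : X →ₗ[k] C ⊗[k] X} (hX : IsLeftComodule k C lamX)
    (x : X) :
    ∃ N : Submodule k X, FiniteDimensional k N ∧ x ∈ N ∧
      ∃ lamN : N →ₗ[k] C ⊗[k] N, IsLeftComodule k C lamN ∧
        LinearMap.lTensor C N.subtype ∘ₗ lamN = lamX ∘ₗ N.subtype := by
  classical
  let b : Module.Basis _ k C := Module.Basis.ofVectorSpace k C
  set s := lcoord b (lamX x) with hs
  set N : Submodule k X := Submodule.span k (Set.range ⇑s) with hN
  have hfin : FiniteDimensional k N := by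
    apply FiniteDimensional.span_of_finite
    apply Set.Finite.subset (Set.Finite.insert 0 ((s.support.finite_toSet).image ⇑s))
    rintro y ⟨i, rfl⟩
    by_cases hi : i ∈ s.support
    · exact Set.mem_insert_of_mem _ ⟨i, hi, rfl⟩
    · simp only [Finsupp.notMem_support_iff] at hi
      rw [hi]; exact Set.mem_insert _ _
  have hcoordN : ∀ i, lcoord b (lamX x) i ∈ N := fun i => Submodule.subset_span ⟨i, rfl⟩
  have hxN : x ∈ N := by
    have hx0 : lap (ε) (lamX x) = x := LinearMap.congr_fun hX.counit x
    rw [← hx0, lap_eq_sum_coords b]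
    apply Submodule.finsuppSum_mem
    intro i _
    exact Submodule.smul_mem N _ (hcoordN i)
  -- the span is a subcomodule
  set R' := LinearMap.range (LinearMap.lTensor C N.subtype) with hR'
  have hgen : ∀ γ, lamX (s γ) ∈ R' := by
    intro γ
    have hco : LinearMap.lTensor C lamX (lamX x)
        = (TensorProduct.assoc k C C X) (LinearMap.rTensor X Δ (lamX x)) :=
      LinearMap.congr_fun hX.coassoc x
    have h1 : lamX (s γ) = lcoord b (LinearMap.lTensor C lamX (lamX x)) γ := by
      rw [lcoord_lTensor]
    rw [h1, hco, lcoord_assoc_comul]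
    exact rTensor_mem_range_of_coords b N _ _ hcoordN
  have hmem : ∀ n : N, lamX (n : X) ∈ R' := by
    have hle : N ≤ Submodule.comap lamX R' := by
      rw [hN, Submodule.span_le]
      rintro y ⟨γ, rfl⟩
      exact hgen γ
    exact fun n => hle n.2
  have hinj : Function.Injective (LinearMap.lTensor C N.subtype) :=
    Module.Flat.lTensor_preserves_injective_linearMap N.subtype N.injective_subtype
  let eR : (C ⊗[k] N) ≃ₗ[k] R' := LinearEquiv.ofInjective _ hinj
  let lamN : N →ₗ[k] C ⊗[k] N :=
    eR.symm.toLinearMap ∘ₗ LinearMap.codRestrict R' (lamX ∘ₗ N.subtype) (fun n => hmem n)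
  have hcomm : ∀ n : N, LinearMap.lTensor C N.subtype (lamN n) = lamX (n : X) := by
    intro n
    have h1 : ((LinearEquiv.ofInjective _ hinj)
          (eR.symm (LinearMap.codRestrict R' (lamX ∘ₗ N.subtype) (fun n => hmem n) n)) : C ⊗[k] X)
        = (LinearMap.codRestrict R' (lamX ∘ₗ N.subtype) (fun n => hmem n) n : C ⊗[k] X) := by
      rw [eR.apply_symm_apply]
    rw [show LinearMap.lTensor C N.subtype (lamN n)
        = ((LinearEquiv.ofInjective _ hinj)
          (eR.symm (LinearMap.codRestrict R' (lamX ∘ₗ N.subtype) (fun n => hmem n) n)) : C ⊗[k] X)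
      from rfl, h1]
    rfl
  have hcomm' : LinearMap.lTensor C N.subtype ∘ₗ lamN = lamX ∘ₗ N.subtype :=
    LinearMap.ext hcomm
  refine ⟨N, hfin, hxN, lamN, ⟨?_, ?_⟩, hcomm'⟩
  · -- coassoc
    apply LinearMap.ext; intro n
    simp only [LinearMap.coe_comp, Function.comp_apply, LinearEquiv.coe_coe]
    have hinj2 : Function.Injective (LinearMap.lTensor C (LinearMap.lTensor C N.subtype)) :=
      Module.Flat.lTensor_preserves_injective_linearMap _ hinj
    apply hinj2
    have lhs : LinearMap.lTensor C (LinearMap.lTensor C N.subtype)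
        ((TensorProduct.map LinearMap.id lamN) (lamN n))
          = (TensorProduct.assoc k C C X) (LinearMap.rTensor X Δ (lamX (n : X))) := by
      rw [show (TensorProduct.map LinearMap.id lamN) (lamN n)
          = LinearMap.lTensor C lamN (lamN n) from rfl]
      have hco2 : LinearMap.lTensor C lamX (lamX (n : X))
          = (TensorProduct.assoc k C C X) (LinearMap.rTensor X Δ (lamX (n : X))) :=
        LinearMap.congr_fun hX.coassoc (n : X)
      rw [← LinearMap.lTensor_comp_apply, hcomm', LinearMap.lTensor_comp_apply, hcomm n, hco2]
    have rhs : LinearMap.lTensor C (LinearMap.lTensor C N.subtype)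
        ((TensorProduct.assoc k C C ↥N) ((TensorProduct.map Δ LinearMap.id) (lamN n)))
          = (TensorProduct.assoc k C C X) (LinearMap.rTensor X Δ (lamX (n : X))) := by
      have hnat : (LinearMap.lTensor C (LinearMap.lTensor C N.subtype))
            ∘ₗ (TensorProduct.assoc k C C ↥N).toLinearMap
          = (TensorProduct.assoc k C C X).toLinearMap
            ∘ₗ (LinearMap.lTensor (C ⊗[k] C) N.subtype) := by
        apply TensorProduct.ext_threefold
        intro c d n'
        simp
      have h5 := LinearMap.congr_fun hnat (LinearMap.rTensor (↥N) Δ (lamN n))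
      simp only [LinearMap.coe_comp, Function.comp_apply, LinearEquiv.coe_coe] at h5
      have h6a : LinearMap.lTensor (C ⊗[k] C) N.subtype ∘ₗ LinearMap.rTensor (↥N) Δ
          = LinearMap.rTensor X Δ ∘ₗ LinearMap.lTensor C N.subtype := by
        rw [LinearMap.lTensor_comp_rTensor, LinearMap.rTensor_comp_lTensor]
      have h6 := LinearMap.congr_fun h6a (lamN n)
      simp only [LinearMap.coe_comp, Function.comp_apply] at h6
      rw [show (TensorProduct.map Δ LinearMap.id) (lamN n)
          = LinearMap.rTensor ↥N Δ (lamN n) from rfl]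
      rw [h5, h6, hcomm n]
    rw [lhs, rhs]
  · -- counit
    apply LinearMap.ext; intro n
    simp only [LinearMap.coe_comp, Function.comp_apply, LinearEquiv.coe_coe, LinearMap.id_coe,
      id_eq]
    apply N.injective_subtype
    have h1 : (N.subtype) ((TensorProduct.lid k ↥N)
          ((TensorProduct.map (ε) LinearMap.id) (lamN n)))
        = lap (ε) (LinearMap.lTensor C N.subtype (lamN n)) := by
      rw [lap_lTensor]
      rfl
    rw [h1, hcomm n]
    exact LinearMap.congr_fun hX.counit (n : X)

end Subcomodule

section FqcfToGen

/-- From an embedding of the dual of a finite dimensional left comodule into a free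
`C*`-module, produce a surjective comodule map from a free comodule. -/
lemma exists_free_surjection {N : Type} [AddCommGroup N] [Module k N] [FiniteDimensional k N]
    {lam : N →ₗ[k] C ⊗[k] N} (hlam : IsLeftComodule k C lam)
    (hemb : EmbedsInFree k C (dualCoactionR lam)) :
    ∃ (J : Type) (φ : (J →₀ C) →ₗ[k] N), Function.Surjective φ ∧
      (TensorProduct.map LinearMap.id φ) ∘ₗ freeCoaction k C J = lam ∘ₗ φ := by
  classical
  obtain ⟨J, Φ, hΦinj, hΦmod⟩ := hemb
  let φj : J → C →ₗ[k] N := fun j =>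
    (Module.evalEquiv k N).symm.toLinearMap ∘ₗ (Finsupp.lapply j ∘ₗ Φ).flip
  have hφj : ∀ (j : J) (c : C) (α : Module.Dual k N), α (φj j c) = Φ α j c := by
    intro j c α
    show α ((Module.evalEquiv k N).symm (((Finsupp.lapply j ∘ₗ Φ).flip) c)) = _
    rw [Module.apply_evalEquiv_symm_apply]
    rfl
  let φ : (J →₀ C) →ₗ[k] N := Finsupp.lsum k fun j => φj j
  have hφsingle : ∀ (j : J) (c : C), φ (Finsupp.single j c) = φj j c := fun j c =>
    Finsupp.lsum_single _ _ _ _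
  have hsurj : Function.Surjective φ := by
    rw [← LinearMap.range_eq_top]
    by_contra hne
    have hlt : LinearMap.range φ < ⊤ := lt_top_iff_ne_top.mpr hne
    obtain ⟨α, hα0, hαmap⟩ := Submodule.exists_dual_map_eq_bot_of_lt_top hlt inferInstance
    apply hα0
    apply hΦinj
    rw [map_zero]
    ext j c
    have hmem : α (φ (Finsupp.single j c)) ∈ Submodule.map α (LinearMap.range φ) :=
      Submodule.mem_map_of_mem (LinearMap.mem_range_self φ _)
    rw [hαmap, Submodule.mem_bot] at hmem
    have : Φ α j c = α (φj j c) := (hφj j c α).symm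
    rw [this, ← hφsingle j c, hmem]
    simp
  refine ⟨J, φ, hsurj, ?_⟩
  apply Finsupp.lhom_ext
  intro j c
  simp only [LinearMap.coe_comp, Function.comp_apply]
  rw [hφsingle]
  have hfree : freeCoaction k C J (Finsupp.single j c)
      = (TensorProduct.map LinearMap.id (Finsupp.lsingle j)) ((Coalgebra.comul : C →ₗ[k] C ⊗[k] C) c) := by
    show (Finsupp.lsum k _) (Finsupp.single j c) = _
    rw [Finsupp.lsum_single]
    rfl
  rw [hfree]
  apply sep_dpair (V := C) (W := N)
  intro f α
  have hA : (TensorProduct.map LinearMap.id φ)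
        ((TensorProduct.map LinearMap.id (Finsupp.lsingle j)) ((Coalgebra.comul : C →ₗ[k] C ⊗[k] C) c))
      = LinearMap.lTensor C (φ ∘ₗ Finsupp.lsingle j) ((Coalgebra.comul : C →ₗ[k] C ⊗[k] C) c) := by
    rw [show (TensorProduct.map LinearMap.id φ : C ⊗[k] (J →₀ C) →ₗ[k] C ⊗[k] N)
        = LinearMap.lTensor C φ from rfl,
      show (TensorProduct.map LinearMap.id (Finsupp.lsingle j) : C ⊗[k] C →ₗ[k] C ⊗[k] (J →₀ C))
        = LinearMap.lTensor C (Finsupp.lsingle j) from rfl,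
      ← LinearMap.lTensor_comp_apply]
  have hcompj : φ ∘ₗ Finsupp.lsingle j = φj j := by
    apply LinearMap.ext; intro c'
    exact hφsingle j c'
  rw [hA, hcompj]
  have hαφ : α ∘ₗ φj j = Φ α j := by
    apply LinearMap.ext; intro c'
    exact hφj j c' α
  calc dpair f α (LinearMap.lTensor C (φj j) ((Coalgebra.comul : C →ₗ[k] C ⊗[k] C) c))
      = f (rap (α ∘ₗ φj j) ((Coalgebra.comul : C →ₗ[k] C ⊗[k] C) c)) := by
        rw [← applied_rap, rap_lTensor]
    _ = conv k C f (Φ α j) c := by rw [hαφ, applied_rap, conv_apply']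
    _ = Φ (dualAct k C (dualCoactionR lam) f α) j c := by rw [hΦmod f α j]
    _ = (dualAct k C (dualCoactionR lam) f α) (φj j c) := (hφj j c _).symm
    _ = α (leftAct lam f (φj j c)) := by
        rw [dualAct_apply, rapD_apply, dpair_eval_dualCoactionR]
    _ = dpair f α (lam (φj j c)) := by rw [← applied_lap]; rfl

theorem fqcf_implies_gen (h : LeftfQcF k C) : IsGeneratorLeftComodules k C := by
  intro X _ _ lamX hX
  have hpiece : ∀ x : X, ∃ (J : Type) (ψ : (J →₀ C) →ₗ[k] X),
      (∃ ξ, ψ ξ = x) ∧ (TensorProduct.map LinearMap.id ψ) ∘ₗ freeCoaction k C J = lamX ∘ₗ ψ := by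
    intro x
    obtain ⟨N, hfin, hxN, lamN, hN, hcomm⟩ := exists_findim_subcomodule hX x
    haveI := hfin
    have hemb : EmbedsInFree k C (dualCoactionR lamN) :=
      h (Module.Dual k N) (dualCoactionR lamN) (dualCoactionR_isRightComodule hN) inferInstance
    obtain ⟨J, φ, hsurj, hcom⟩ := exists_free_surjection hN hemb
    refine ⟨J, N.subtype ∘ₗ φ, ?_, ?_⟩
    · obtain ⟨ξ, hξ⟩ := hsurj ⟨x, hxN⟩
      exact ⟨ξ, by rw [LinearMap.comp_apply, hξ]; rfl⟩
    · apply LinearMap.ext; intro ξ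
      simp only [LinearMap.coe_comp, Function.comp_apply]
      have h1 := LinearMap.congr_fun hcom ξ
      simp only [LinearMap.coe_comp, Function.comp_apply] at h1
      have h2 : (TensorProduct.map LinearMap.id (N.subtype ∘ₗ φ)) (freeCoaction k C J ξ)
          = LinearMap.lTensor C N.subtype (LinearMap.lTensor C φ (freeCoaction k C J ξ)) := by
        rw [show (TensorProduct.map LinearMap.id (N.subtype ∘ₗ φ) :
            C ⊗[k] (J →₀ C) →ₗ[k] C ⊗[k] X) = LinearMap.lTensor C (N.subtype ∘ₗ φ) from rfl,
          LinearMap.lTensor_comp_apply]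
      rw [h2, show LinearMap.lTensor C φ (freeCoaction k C J ξ)
          = (TensorProduct.map LinearMap.id φ) (freeCoaction k C J ξ) from rfl, h1]
      exact LinearMap.congr_fun hcomm (φ ξ)
  choose Jx ψx hx hcomx using hpiece
  refine ⟨(Σ x : X, Jx x), Finsupp.lsum k (fun p : (Σ x : X, Jx x) => ψx p.1 ∘ₗ Finsupp.lsingle p.2),
    ?_, ?_⟩
  · intro x
    obtain ⟨ξ, hξ⟩ := hx x
    refine ⟨Finsupp.mapDomain (Sigma.mk x) ξ, ?_⟩
    have claim : ∀ ξ' : Jx x →₀ C,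
        (Finsupp.lsum k (fun p : (Σ x : X, Jx x) => ψx p.1 ∘ₗ Finsupp.lsingle p.2))
          (Finsupp.mapDomain (Sigma.mk x) ξ') = ψx x ξ' := by
      intro ξ'
      induction ξ' using Finsupp.induction_linear with
      | zero => simp
      | add a b ha hb => rw [Finsupp.mapDomain_add, map_add, ha, hb, map_add]
      | single j c => rw [Finsupp.mapDomain_single, Finsupp.lsum_single]; rfl
    rw [claim, hξ]
  · apply Finsupp.lhom_ext
    intro p c
    simp only [LinearMap.coe_comp, Function.comp_apply]
    set φtot := Finsupp.lsum k (fun p : (Σ x : X, Jx x) => ψx p.1 ∘ₗ Finsupp.lsingle p.2) with hφtot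
    have hfree : freeCoaction k C (Σ x : X, Jx x) (Finsupp.single p c)
        = (TensorProduct.map LinearMap.id (Finsupp.lsingle p))
            ((Coalgebra.comul : C →ₗ[k] C ⊗[k] C) c) := by
      show (Finsupp.lsum k _) (Finsupp.single p c) = _
      rw [Finsupp.lsum_single]
      rfl
    have hfree2 : freeCoaction k C (Jx p.1) (Finsupp.single p.2 c)
        = (TensorProduct.map LinearMap.id (Finsupp.lsingle p.2))
            ((Coalgebra.comul : C →ₗ[k] C ⊗[k] C) c) := by
      show (Finsupp.lsum k _) (Finsupp.single p.2 c) = _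
      rw [Finsupp.lsum_single]
      rfl
    have hcompp : φtot ∘ₗ Finsupp.lsingle p = ψx p.1 ∘ₗ Finsupp.lsingle p.2 := by
      apply LinearMap.ext; intro c'
      show φtot (Finsupp.single p c') = _
      rw [hφtot, Finsupp.lsum_single]
    have h1 := LinearMap.congr_fun (hcomx p.1) (Finsupp.single p.2 c)
    simp only [LinearMap.coe_comp, Function.comp_apply] at h1
    rw [hfree2] at h1
    have chain : (TensorProduct.map LinearMap.id φtot)
          ((TensorProduct.map LinearMap.id (Finsupp.lsingle p))
            ((Coalgebra.comul : C →ₗ[k] C ⊗[k] C) c))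
        = (TensorProduct.map LinearMap.id (ψx p.1))
            ((TensorProduct.map LinearMap.id (Finsupp.lsingle p.2))
              ((Coalgebra.comul : C →ₗ[k] C ⊗[k] C) c)) := by
      rw [show (TensorProduct.map LinearMap.id φtot :
          C ⊗[k] ((Σ x : X, Jx x) →₀ C) →ₗ[k] C ⊗[k] X) = LinearMap.lTensor C φtot from rfl,
        show (TensorProduct.map LinearMap.id (Finsupp.lsingle p) :
          C ⊗[k] C →ₗ[k] C ⊗[k] ((Σ x : X, Jx x) →₀ C))
          = LinearMap.lTensor C (Finsupp.lsingle p) from rfl,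
        ← LinearMap.lTensor_comp_apply, hcompp, LinearMap.lTensor_comp_apply]
      rfl
    rw [hfree, chain, h1]
    have : φtot (Finsupp.single p c) = ψx p.1 (Finsupp.single p.2 c) := by
      rw [hφtot, Finsupp.lsum_single]
      rfl
    rw [this]

end FqcfToGen

section GenToFqcf

theorem gen_implies_fqcf (hGen : IsGeneratorLeftComodules k C) : LeftfQcF k C := by
  intro M _ _ ρ hρ hfd
  haveI := hfd
  classical
  obtain ⟨I, φ, hsurj, hcom⟩ :=
    hGen (Module.Dual k M) (dualCoaction ρ) (dualCoaction_isLeftComodule hρ)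
  let Ψ : I → M →ₗ[k] Module.Dual k C := fun i => (φ ∘ₗ Finsupp.lsingle i).flip
  have hΨ : ∀ (i : I) (m : M) (c : C), Ψ i m c = φ (Finsupp.single i c) m := fun i m c => rfl
  have hmod : ∀ (f : Module.Dual k C) (m : M) (i : I),
      Ψ i (dualAct k C ρ f m) = conv k C f (Ψ i m) := by
    intro f m i
    apply LinearMap.ext; intro c
    have h1 := LinearMap.congr_fun hcom (Finsupp.single i c)
    simp only [LinearMap.coe_comp, Function.comp_apply] at h1
    have hfree : freeCoaction k C I (Finsupp.single i c)
        = (TensorProduct.map LinearMap.id (Finsupp.lsingle i))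
            ((Coalgebra.comul : C →ₗ[k] C ⊗[k] C) c) := by
      show (Finsupp.lsum k _) (Finsupp.single i c) = _
      rw [Finsupp.lsum_single]
      rfl
    rw [hfree] at h1
    have h2 := congrArg (dpair f (Module.Dual.eval k M m)) h1
    rw [dpair_eval_dualCoaction] at h2
    have h3 : (TensorProduct.map LinearMap.id φ)
          ((TensorProduct.map LinearMap.id (Finsupp.lsingle i))
            ((Coalgebra.comul : C →ₗ[k] C ⊗[k] C) c))
        = LinearMap.lTensor C (φ ∘ₗ Finsupp.lsingle i)
            ((Coalgebra.comul : C →ₗ[k] C ⊗[k] C) c) := by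
      rw [show (TensorProduct.map LinearMap.id φ :
          C ⊗[k] (I →₀ C) →ₗ[k] C ⊗[k] Module.Dual k M) = LinearMap.lTensor C φ from rfl,
        show (TensorProduct.map LinearMap.id (Finsupp.lsingle i) :
          C ⊗[k] C →ₗ[k] C ⊗[k] (I →₀ C)) = LinearMap.lTensor C (Finsupp.lsingle i) from rfl,
        ← LinearMap.lTensor_comp_apply]
    rw [h3] at h2
    have h4 : dpair f (Module.Dual.eval k M m)
          (LinearMap.lTensor C (φ ∘ₗ Finsupp.lsingle i)
            ((Coalgebra.comul : C →ₗ[k] C ⊗[k] C) c))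
        = conv k C f (Ψ i m) c := by
      rw [← applied_rap, rap_lTensor]
      have h5 : (Module.Dual.eval k M m) ∘ₗ (φ ∘ₗ Finsupp.lsingle i) = Ψ i m := by
        apply LinearMap.ext; intro c'
        rfl
      rw [h5, applied_rap, conv_apply']
    rw [h4] at h2
    exact h2.symm
  have hker : ∀ m : M, (∀ i, Ψ i m = 0) → m = 0 := by
    intro m hm
    apply (Module.forall_dual_apply_eq_zero_iff k m).mp
    intro α
    obtain ⟨ξ, rfl⟩ := hsurj α
    induction ξ using Finsupp.induction_linear with
    | zero => simp
    | add a b ha hb => rw [map_add]; rw [LinearMap.add_apply, ha, hb, add_zero]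
    | single i c =>
        have := congrArg (fun g : Module.Dual k C => g c) (hm i)
        simpa [hΨ] using this
  let KS : Set (Submodule k M) := {K | ∃ t : Finset I, K = ⨅ i ∈ t, LinearMap.ker (Ψ i)}
  obtain ⟨K₀, hK₀mem, hmin⟩ := IsArtinian.set_has_minimal KS ⟨⊤, ∅, by simp⟩
  obtain ⟨t₀, ht₀⟩ := hK₀mem
  have hK0 : K₀ = ⊥ := by
    rw [eq_bot_iff]
    intro m hm
    have hmK : ∀ i, Ψ i m = 0 := by
      intro i
      have hsub : K₀ ⊓ LinearMap.ker (Ψ i) ∈ KS := by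
        refine ⟨insert i t₀, ?_⟩
        rw [ht₀, Finset.iInf_insert, inf_comm]
      have hnlt : ¬(K₀ ⊓ LinearMap.ker (Ψ i) < K₀) := hmin _ hsub
      have heq : K₀ ⊓ LinearMap.ker (Ψ i) = K₀ :=
        ((inf_le_left : K₀ ⊓ LinearMap.ker (Ψ i) ≤ K₀).lt_or_eq).resolve_left hnlt
      have hle : K₀ ≤ LinearMap.ker (Ψ i) := heq ▸ inf_le_right
      exact LinearMap.mem_ker.mp (hle hm)
    exact (Submodule.mem_bot k).mpr (hker m hmK)
  refine ⟨{i // i ∈ t₀},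
    (Finsupp.linearEquivFunOnFinite k (Module.Dual k C) {i // i ∈ t₀}).symm.toLinearMap
      ∘ₗ LinearMap.pi (fun j : {i // i ∈ t₀} => Ψ j.1), ?_, ?_⟩
  · intro m m' hmm
    simp only [LinearMap.coe_comp, Function.comp_apply, LinearEquiv.coe_coe] at hmm
    have hpi := (Finsupp.linearEquivFunOnFinite k (Module.Dual k C) {i // i ∈ t₀}).symm.injective hmm
    have h1 : ∀ j : {i // i ∈ t₀}, Ψ j.1 m = Ψ j.1 m' := fun j => congrFun hpi j
    have hsub : m - m' ∈ K₀ := by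
      rw [ht₀]
      refine Submodule.mem_iInf _ |>.mpr fun i => Submodule.mem_iInf _ |>.mpr fun hi => ?_
      rw [LinearMap.mem_ker, map_sub, h1 ⟨i, hi⟩, sub_self]
    rw [hK0, Submodule.mem_bot] at hsub
    exact sub_eq_zero.mp hsub
  · intro f m j
    simp only [LinearMap.coe_comp, Function.comp_apply, LinearEquiv.coe_coe]
    have hcoe : ∀ (g : {i // i ∈ t₀} → Module.Dual k C) (j' : {i // i ∈ t₀}),
        ((Finsupp.linearEquivFunOnFinite k (Module.Dual k C) {i // i ∈ t₀}).symm g) j' = g j' := by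
      intro g j'
      rfl
    rw [hcoe, hcoe]
    simp only [LinearMap.pi_apply]
    exact hmod f m j.1

end GenToFqcf

end Main

end Paper

/-- `C` generates the category of its left comodules iff every finite
dimensional right `C`-comodule embeds, as a left `C*`-module, in a free left `C*`-module
(i.e. `C` is left f-qcF). -/
theorem stmt3 (k : Type) [Field k] (C : Type) [AddCommGroup C] [Module k C] [Coalgebra k C] :
    Paper.IsGeneratorLeftComodules k C ↔ Paper.LeftfQcF k C :=
  ⟨fun h => Paper.gen_implies_fqcf h, fun h => Paper.fqcf_implies_gen h⟩
end
end

section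
/- A coalgebra C is left f-qcF (i.e. every finite dimensional right C-comodule embeds as a left C*-module in a free left C*-module) if and only if every finite dimensional right coideal of C embeds, as a left C*-module, in a free left C*-module. -/
open TensorProduct

noncomputable section
section AuxStmt5
namespace Paper
variable (k : Type) [Field k]
variable (C : Type) [AddCommGroup C] [Module k C] [Coalgebra k C]
variable {M : Type} [AddCommGroup M] [Module k M]

set_option linter.unusedSectionVars false

section Aux
variable {k C}

omit [Coalgebra k C] in
lemma map_id_inj {A : Type} [AddCommGroup A] [Module k A] {P : Type} [AddCommGroup P] [Module k P]
    (f : A →ₗ[k] C) (hf : Function.Injective f) :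
    Function.Injective (TensorProduct.map f (LinearMap.id (M := P))) :=
  Module.Flat.rTensor_preserves_injective_linearMap (M := P) f hf

/-- coideal comodule structure with all needed properties -/
lemma coideal_struct (N : Submodule k C)
    (hN : ∀ x ∈ N, Coalgebra.comul (R := k) x ∈
      LinearMap.range (TensorProduct.map N.subtype (LinearMap.id (M := C)))) :
    ∃ ρN : N →ₗ[k] N ⊗[k] C,
      (TensorProduct.map N.subtype LinearMap.id) ∘ₗ ρN = Coalgebra.comul ∘ₗ N.subtype ∧
      IsRightComodule k C ρN ∧
      ∀ (f : Module.Dual k C) (m : N),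
        (dualAct k C ρN f m : C) = dualAct k C (Coalgebra.comul (R := k)) f (m : C) := by
  classical
  set ι := N.subtype with hι
  set e := TensorProduct.map ι (LinearMap.id (M := C)) with he_def
  have he : Function.Injective e := map_id_inj ι N.injective_subtype
  let E := LinearEquiv.ofInjective e he
  set ρN : N →ₗ[k] N ⊗[k] C := E.symm.toLinearMap ∘ₗ LinearMap.codRestrict (LinearMap.range e)
    (Coalgebra.comul ∘ₗ ι) (fun n => hN n n.2) with hρN
  have hkey : e ∘ₗ ρN = Coalgebra.comul ∘ₗ ι := by
    ext n
    simp only [hρN, LinearMap.comp_apply, LinearEquiv.coe_coe]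
    exact congrArg Subtype.val (E.apply_symm_apply _)
  have hkey' : ∀ n : N, e (ρN n) = Coalgebra.comul (R := k) (n : C) :=
    fun n => LinearMap.congr_fun hkey n
  -- ι ∘ rid = rid ∘ (map ι id)
  have hrid : ∀ s : N ⊗[k] k,
      ι ((TensorProduct.rid k N) s)
        = (TensorProduct.rid k C) (TensorProduct.map ι (LinearMap.id (M := k)) s) := by
    intro s
    induction s using TensorProduct.induction_on with
    | zero => simp
    | tmul n a => simp
    | add x y hx hy => simp [map_add, hx, hy]
  -- swapping map ι id with map id f
  have hswap : ∀ (f : Module.Dual k C) (s : N ⊗[k] C),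
      TensorProduct.map ι (LinearMap.id (M := k)) (TensorProduct.map LinearMap.id f s)
        = TensorProduct.map (LinearMap.id (M := C)) f (e s) := by
    intro f s
    have h1 : TensorProduct.map ι (LinearMap.id (M := k)) ∘ₗ
        TensorProduct.map (LinearMap.id (M := N)) f
        = TensorProduct.map (LinearMap.id (M := C)) f ∘ₗ e := by
      rw [he_def, ← TensorProduct.map_comp, ← TensorProduct.map_comp]
      simp
    exact LinearMap.congr_fun h1 s
  have hcompat : ∀ (f : Module.Dual k C) (m : N),
      (dualAct k C ρN f m : C) = dualAct k C (Coalgebra.comul (R := k)) f (m : C) := by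
    intro f m
    show ι ((TensorProduct.rid k N) (TensorProduct.map LinearMap.id f (ρN m))) = _
    rw [hrid, hswap, hkey' m]
    rfl
  refine ⟨ρN, hkey, ⟨?_, ?_⟩, hcompat⟩
  · -- coassociativity
    apply LinearMap.ext
    intro n
    have he2 : Function.Injective
        (TensorProduct.map ι (LinearMap.id (M := C ⊗[k] C))) :=
      map_id_inj ι N.injective_subtype
    apply he2
    set t := ρN n with ht
    -- LHS
    have hassoc : ∀ u : (N ⊗[k] C) ⊗[k] C,
        TensorProduct.map ι (LinearMap.id (M := C ⊗[k] C))
            ((TensorProduct.assoc k N C C) u)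
          = (TensorProduct.assoc k C C C)
              (TensorProduct.map e (LinearMap.id (M := C)) u) := by
      intro u
      induction u using TensorProduct.induction_on with
      | zero => simp
      | tmul v c =>
        induction v using TensorProduct.induction_on with
        | zero => simp
        | tmul n d => simp [he_def]
        | add x y hx hy => simp [add_tmul, map_add, hx, hy]
      | add x y hx hy => simp [map_add, hx, hy]
    simp only [LinearMap.comp_apply, LinearEquiv.coe_coe]
    rw [hassoc]
    have h2 : TensorProduct.map e (LinearMap.id (M := C))
        (TensorProduct.map ρN LinearMap.id t)
        = TensorProduct.map Coalgebra.comul (LinearMap.id (M := C)) (e t) := by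
      have : TensorProduct.map e (LinearMap.id (M := C)) ∘ₗ
          TensorProduct.map ρN LinearMap.id
          = TensorProduct.map Coalgebra.comul (LinearMap.id (M := C)) ∘ₗ e := by
        rw [he_def, ← TensorProduct.map_comp, ← TensorProduct.map_comp]
        rw [← he_def, hkey]
      exact LinearMap.congr_fun this t
    rw [h2, hkey' n]
    have h3 : TensorProduct.map ι (LinearMap.id (M := C ⊗[k] C))
        (TensorProduct.map (LinearMap.id (M := N)) Coalgebra.comul t)
        = TensorProduct.map (LinearMap.id (M := C)) Coalgebra.comul (e t) := by
      have : TensorProduct.map ι (LinearMap.id (M := C ⊗[k] C)) ∘ₗ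
          TensorProduct.map (LinearMap.id (M := N)) Coalgebra.comul
          = TensorProduct.map (LinearMap.id (M := C)) Coalgebra.comul ∘ₗ e := by
        rw [he_def, ← TensorProduct.map_comp, ← TensorProduct.map_comp]
        simp
      exact LinearMap.congr_fun this t
    rw [h3, hkey' n]
    exact Coalgebra.coassoc_apply (n : C)
  · -- counit
    apply LinearMap.ext
    intro n
    apply N.injective_subtype
    set t := ρN n with ht
    simp only [LinearMap.comp_apply, LinearEquiv.coe_coe, LinearMap.id_apply]
    rw [hrid]
    have : TensorProduct.map ι (LinearMap.id (M := k))
        (TensorProduct.map (LinearMap.id (M := N)) Coalgebra.counit t)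
        = TensorProduct.map (LinearMap.id (M := C)) Coalgebra.counit (e t) := by
      have h1 : TensorProduct.map ι (LinearMap.id (M := k)) ∘ₗ
          TensorProduct.map (LinearMap.id (M := N)) Coalgebra.counit
          = TensorProduct.map (LinearMap.id (M := C)) Coalgebra.counit ∘ₗ e := by
        rw [he_def, ← TensorProduct.map_comp, ← TensorProduct.map_comp]
        simp
      exact LinearMap.congr_fun h1 t
    rw [this, hkey' n]
    have := Coalgebra.lTensor_counit_comul (R := k) (n : C)
    rw [show (LinearMap.lTensor C (Coalgebra.counit (R := k) (A := C)))
      = TensorProduct.map (LinearMap.id (M := C)) Coalgebra.counit from rfl] at this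
    rw [this]
    simp


-- basis-component maps of a comodule are comodule maps into C
section Theta
variable {n : ℕ} (b : Module.Basis (Fin n) k M) (ρ : M →ₗ[k] M ⊗[k] C)

def theta (i : Fin n) : M →ₗ[k] C :=
  (TensorProduct.lid k C).toLinearMap ∘ₗ TensorProduct.map (b.coord i) LinearMap.id ∘ₗ ρ

lemma theta_recon (t : M ⊗[k] C) :
    ∑ i, b i ⊗ₜ[k] ((TensorProduct.lid k C) (TensorProduct.map (b.coord i) LinearMap.id t))
      = t := by
  induction t using TensorProduct.induction_on with
  | zero => simp
  | tmul x c =>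
    simp only [TensorProduct.map_tmul, LinearMap.id_apply, TensorProduct.lid_tmul]
    have h1 : ∑ i, b i ⊗ₜ[k] ((b.coord i) x • c) = (∑ i, (b.coord i) x • b i) ⊗ₜ[k] c := by
      rw [TensorProduct.sum_tmul]
      exact Finset.sum_congr rfl fun i _ => by
        rw [TensorProduct.tmul_smul, TensorProduct.smul_tmul']
    rw [h1]
    simp only [Module.Basis.coord_apply]
    rw [b.sum_repr]
  | add x y hx hy =>
    simp only [map_add, TensorProduct.tmul_add]
    rw [Finset.sum_add_distrib, hx, hy]

lemma rho_eq_sum (m : M) : ρ m = ∑ i, b i ⊗ₜ[k] theta b ρ i m := by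
  rw [← theta_recon b (ρ m)]; rfl

lemma comul_theta (hρ : IsRightComodule k C ρ) (i : Fin n) :
    Coalgebra.comul ∘ₗ theta b ρ i
      = TensorProduct.map (theta b ρ i) LinearMap.id ∘ₗ ρ := by
  set A : M ⊗[k] (C ⊗[k] C) →ₗ[k] C ⊗[k] C :=
    (TensorProduct.lid k (C ⊗[k] C)).toLinearMap ∘ₗ
      TensorProduct.map (b.coord i) LinearMap.id with hA
  have claim1 : (Coalgebra.comul (R := k) (A := C)) ∘ₗ (TensorProduct.lid k C).toLinearMap ∘ₗ
      TensorProduct.map (b.coord i) (LinearMap.id (M := C))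
      = A ∘ₗ TensorProduct.map (LinearMap.id (M := M)) Coalgebra.comul := by
    apply TensorProduct.ext'
    intro x c
    simp [hA]
  have claim2 : TensorProduct.map (theta b ρ i) (LinearMap.id (M := C))
      = A ∘ₗ (TensorProduct.assoc k M C C).toLinearMap ∘ₗ
          TensorProduct.map ρ LinearMap.id := by
    apply TensorProduct.ext'
    intro x c
    simp only [TensorProduct.map_tmul, LinearMap.id_apply, LinearMap.comp_apply,
      LinearEquiv.coe_coe]
    have : ∀ s : M ⊗[k] C, A ((TensorProduct.assoc k M C C) (s ⊗ₜ[k] c))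
        = ((TensorProduct.lid k C) (TensorProduct.map (b.coord i) LinearMap.id s)) ⊗ₜ[k] c := by
      intro s
      induction s using TensorProduct.induction_on with
      | zero => simp
      | tmul y d => simp [hA, TensorProduct.smul_tmul']
      | add u v hu hv => simp only [TensorProduct.add_tmul, map_add, hu, hv]
    rw [this (ρ x)]
    rfl
  calc Coalgebra.comul ∘ₗ theta b ρ i
      = (Coalgebra.comul ∘ₗ (TensorProduct.lid k C).toLinearMap ∘ₗ
          TensorProduct.map (b.coord i) LinearMap.id) ∘ₗ ρ := by
        rw [theta]; ext m; simp [LinearMap.comp_apply]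
    _ = A ∘ₗ TensorProduct.map (LinearMap.id (M := M)) Coalgebra.comul ∘ₗ ρ := by
        rw [claim1]; rw [LinearMap.comp_assoc]
    _ = A ∘ₗ (TensorProduct.assoc k M C C).toLinearMap ∘ₗ
          TensorProduct.map ρ LinearMap.id ∘ₗ ρ := by
        rw [← hρ.coassoc]
    _ = TensorProduct.map (theta b ρ i) LinearMap.id ∘ₗ ρ := by
        rw [claim2]; simp only [hA, LinearMap.comp_assoc]

lemma theta_dualAct (hρ : IsRightComodule k C ρ) (i : Fin n) (f : Module.Dual k C) (m : M) :
    theta b ρ i (dualAct k C ρ f m)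
      = dualAct k C (Coalgebra.comul (R := k)) f (theta b ρ i m) := by
  have h1 : Coalgebra.comul (R := k) (theta b ρ i m)
      = TensorProduct.map (theta b ρ i) LinearMap.id (ρ m) :=
    LinearMap.congr_fun (comul_theta b ρ hρ i) m
  have h2 : (TensorProduct.rid k C).toLinearMap ∘ₗ
      TensorProduct.map (LinearMap.id (M := C)) f ∘ₗ
      TensorProduct.map (theta b ρ i) (LinearMap.id (M := C))
      = theta b ρ i ∘ₗ (TensorProduct.rid k M).toLinearMap ∘ₗ
        TensorProduct.map (LinearMap.id (M := M)) f := by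
    apply TensorProduct.ext'
    intro x c
    simp
  show _ = (TensorProduct.rid k C) (TensorProduct.map LinearMap.id f
    (Coalgebra.comul (theta b ρ i m)))
  rw [h1]
  exact (LinearMap.congr_fun h2 (ρ m)).symm

end Theta
end Aux
end Paper
end AuxStmt5

/-- `C` is left f-qcF iff every finite dimensional right coideal of `C`
embeds, as a left `C*`-module, in a free left `C*`-module. -/
theorem stmt5 (k : Type) [Field k] (C : Type) [AddCommGroup C] [Module k C] [Coalgebra k C] :
    Paper.LeftfQcF k C ↔
      ∀ N : Submodule k C, Paper.IsRightCoideal k C N → FiniteDimensional k N →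
        Paper.CoidealEmbedsInFree k C N := by
  constructor
  · -- forward: f-qcF implies coideals embed
    intro h N hN hfd
    obtain ⟨ρN, hkey, hcom, hcompat⟩ := Paper.coideal_struct N hN
    obtain ⟨I, Φ, hinj, hΦ⟩ := h N ρN hcom hfd
    refine ⟨I, Φ, hinj, ?_⟩
    intro f x hx hfx j
    have hsub : (⟨Paper.dualAct k C (Coalgebra.comul (R := k)) f x, hfx⟩ : N)
        = Paper.dualAct k C ρN f ⟨x, hx⟩ := Subtype.ext (hcompat f ⟨x, hx⟩).symm
    rw [hsub]
    exact hΦ f ⟨x, hx⟩ j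
  · -- backward: coideals embed implies f-qcF
    intro h M _ _ ρ hρ hfd
    haveI := hfd
    classical
    set n := Module.finrank k M with hn
    set b : Module.Basis (Fin n) k M := Module.finBasis k M with hb
    set θ : Fin n → (M →ₗ[k] C) := fun i => Paper.theta b ρ i with hθ
    set Ni : Fin n → Submodule k C := fun i => LinearMap.range (θ i) with hNi
    have hcomulθ : ∀ (i : Fin n) (m : M),
        Coalgebra.comul (R := k) (θ i m)
          = TensorProduct.map (θ i) LinearMap.id (ρ m) :=
      fun i m => LinearMap.congr_fun (Paper.comul_theta b ρ hρ i) m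
    have hcoideal : ∀ i, Paper.IsRightCoideal k C (Ni i) := by
      intro i x hx
      obtain ⟨m, rfl⟩ := hx
      rw [hcomulθ i m]
      have hfactor : TensorProduct.map (θ i) (LinearMap.id (M := C))
          = TensorProduct.map (Ni i).subtype (LinearMap.id (M := C)) ∘ₗ
            TensorProduct.map (θ i).rangeRestrict (LinearMap.id (M := C)) := by
        rw [← TensorProduct.map_comp]
        simp [hNi]
        rfl
      rw [hfactor]
      exact ⟨TensorProduct.map (θ i).rangeRestrict LinearMap.id (ρ m), rfl⟩
    have hfdNi : ∀ i, FiniteDimensional k (Ni i) := fun i => inferInstance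
    have hh := fun i : Fin n => h (Ni i) (hcoideal i) (hfdNi i)
    choose J Φi hinj hprop using hh
    set Φ : M →ₗ[k] ((Σ i : Fin n, J i) →₀ Module.Dual k C) :=
      (Finsupp.sigmaFinsuppLEquivPiFinsupp k (M := Module.Dual k C)
        (ιs := J)).symm.toLinearMap ∘ₗ
        LinearMap.pi (fun i => Φi i ∘ₗ (θ i).rangeRestrict) with hΦdef
    refine ⟨(Σ i : Fin n, J i), Φ, ?_, ?_⟩
    · -- injectivity
      have hker : ∀ m, Φ m = 0 → m = 0 := by
        intro m hm
        have hpi : LinearMap.pi (fun i => Φi i ∘ₗ (θ i).rangeRestrict) m = 0 := by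
          have h' : (Finsupp.sigmaFinsuppLEquivPiFinsupp k (M := Module.Dual k C)
              (ιs := J)).symm ((LinearMap.pi fun i => Φi i ∘ₗ (θ i).rangeRestrict) m) = 0 := hm
          exact (LinearEquiv.map_eq_zero_iff _).mp h'
        have hθ0 : ∀ i, θ i m = 0 := by
          intro i
          have h1 : Φi i ((θ i).rangeRestrict m) = 0 := congr_fun hpi i
          have h2 : (θ i).rangeRestrict m = 0 := hinj i (by rw [h1, map_zero])
          have := congrArg Subtype.val h2
          simpa using this
        have hρ0 : ρ m = 0 := by
          rw [Paper.rho_eq_sum b ρ m]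
          simp only [← hθ]
          simp [hθ0]
        have := LinearMap.congr_fun hρ.counit m
        simp only [LinearMap.comp_apply, LinearMap.id_apply, LinearEquiv.coe_coe] at this
        rw [hρ0] at this
        simpa using this.symm
      intro a b hab
      have h0 : Φ (a - b) = 0 := by rw [map_sub, hab, sub_self]
      exact sub_eq_zero.mp (hker _ h0)
    · -- C*-linearity
      intro f m ⟨i, j⟩
      have happ : ∀ (x : M) (j' : J i), Φ x ⟨i, j'⟩ = Φi i ((θ i).rangeRestrict x) j' := by
        intro x j'
        rw [hΦdef]
        simp only [LinearMap.comp_apply, LinearEquiv.coe_coe,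
          Finsupp.sigmaFinsuppLEquivPiFinsupp_symm_apply, LinearMap.pi_apply]
      rw [happ, happ]
      have hmem : θ i m ∈ Ni i := LinearMap.mem_range_self _ m
      have hact : θ i (Paper.dualAct k C ρ f m)
          = Paper.dualAct k C (Coalgebra.comul (R := k)) f (θ i m) :=
        Paper.theta_dualAct b ρ hρ i f m
      have hfmem : Paper.dualAct k C (Coalgebra.comul (R := k)) f (θ i m) ∈ Ni i := by
        rw [← hact]; exact LinearMap.mem_range_self _ _
      have e1 : (θ i).rangeRestrict (Paper.dualAct k C ρ f m)
          = ⟨Paper.dualAct k C (Coalgebra.comul (R := k)) f (θ i m), hfmem⟩ := by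
        apply Subtype.ext
        simpa using hact
      have e2 : (θ i).rangeRestrict m = ⟨θ i m, hmem⟩ := Subtype.ext rfl
      rw [e1, e2]
      exact hprop i f (θ i m) hmem hfmem j
end
end

section
/- Let C be a coalgebra, q ∈ C, and I = { f ∈ C* : f ⇀ q = 0 } be the annihilator of q in C*. If there exists a subset X ⊆ C* such that I equals the left annihilator l(X) = { f ∈ C* : fx = 0 for all x ∈ X }, then the cyclic left C*-module generated by q (equivalently, the right coideal of C generated by q) embeds in a free left C*-module of finite rank. -/
open TensorProduct

noncomputable section
section Aux
open Coalgebra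
variable {k : Type} [Field k] {C : Type} [AddCommGroup C] [Module k C] [Coalgebra k C]

lemma dualAct_repr (f : Module.Dual k C) (c : C) (r : Coalgebra.Repr k c (C × C)) :
    Paper.dualAct k C (Coalgebra.comul (R := k)) f c
      = ∑ i ∈ r.index, f (r.right i) • r.left i := by
  simp only [Paper.dualAct, LinearMap.comp_apply, ← r.eq, map_sum, TensorProduct.map_tmul,
    LinearMap.id_apply, LinearEquiv.coe_coe, TensorProduct.rid_tmul]

lemma conv_repr (f g : Module.Dual k C) (c : C) (r : Coalgebra.Repr k c (C × C)) :
    Paper.conv k C f g c = ∑ i ∈ r.index, f (r.left i) * g (r.right i) := by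
  simp only [Paper.conv, LinearMap.comp_apply, ← r.eq, map_sum, TensorProduct.map_tmul,
    LinearEquiv.coe_coe, TensorProduct.lid_tmul, smul_eq_mul]

end Aux

section Aux2
open Coalgebra
variable {k : Type} [Field k] {C : Type} [AddCommGroup C] [Module k C] [Coalgebra k C]

lemma conv_add_left (f₁ f₂ g : Module.Dual k C) :
    Paper.conv k C (f₁ + f₂) g = Paper.conv k C f₁ g + Paper.conv k C f₂ g := by
  ext c
  simp [conv_repr _ _ c (ℛ k c), add_mul, Finset.sum_add_distrib]

lemma conv_smul_left (a : k) (f g : Module.Dual k C) :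
    Paper.conv k C (a • f) g = a • Paper.conv k C f g := by
  ext c
  simp [conv_repr _ _ c (ℛ k c), Finset.mul_sum, mul_assoc]

lemma conv_assoc (f g h : Module.Dual k C) :
    Paper.conv k C (Paper.conv k C f g) h = Paper.conv k C f (Paper.conv k C g h) := by
  ext c
  have key := Coalgebra.sum_tmul_tmul_eq (R := k) (ℛ k c)
    (fun i => ℛ k ((ℛ k c).left i)) (fun i => ℛ k ((ℛ k c).right i))
  have := congrArg ((TensorProduct.lid k k).toLinearMap ∘ₗ
    TensorProduct.map f ((TensorProduct.lid k k).toLinearMap ∘ₗ TensorProduct.map g h)) key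
  simp only [map_sum, LinearMap.comp_apply, TensorProduct.map_tmul, LinearEquiv.coe_coe,
    TensorProduct.lid_tmul, smul_eq_mul] at this
  rw [conv_repr _ _ c (ℛ k c), conv_repr _ _ c (ℛ k c)]
  calc ∑ i ∈ (ℛ k c).index, Paper.conv k C f g ((ℛ k c).left i) * h ((ℛ k c).right i)
      = ∑ i ∈ (ℛ k c).index, ∑ j ∈ (ℛ k ((ℛ k c).left i)).index,
          f ((ℛ k ((ℛ k c).left i)).left j) *
            (g ((ℛ k ((ℛ k c).left i)).right j) * h ((ℛ k c).right i)) := by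
        refine Finset.sum_congr rfl fun i _ => ?_
        rw [conv_repr _ _ _ (ℛ k ((ℛ k c).left i)), Finset.sum_mul]
        simp [mul_assoc]
    _ = ∑ i ∈ (ℛ k c).index, f ((ℛ k c).left i) * Paper.conv k C g h ((ℛ k c).right i) := by
        rw [this]
        refine Finset.sum_congr rfl fun i _ => ?_
        rw [conv_repr _ _ _ (ℛ k ((ℛ k c).right i)), Finset.mul_sum]

lemma dualAct_conv (f g : Module.Dual k C) (c : C) :
    Paper.dualAct k C (Coalgebra.comul (R := k)) (Paper.conv k C f g) c
      = Paper.dualAct k C (Coalgebra.comul (R := k)) f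
          (Paper.dualAct k C (Coalgebra.comul (R := k)) g c) := by
  have key := Coalgebra.sum_tmul_tmul_eq (R := k) (ℛ k c)
    (fun i => ℛ k ((ℛ k c).left i)) (fun i => ℛ k ((ℛ k c).right i))
  have hψ := congrArg ((TensorProduct.rid k C).toLinearMap ∘ₗ
    TensorProduct.map LinearMap.id
      ((TensorProduct.lid k k).toLinearMap ∘ₗ TensorProduct.map f g)) key
  simp only [map_sum, LinearMap.comp_apply, TensorProduct.map_tmul, LinearEquiv.coe_coe,
    TensorProduct.lid_tmul, TensorProduct.rid_tmul, smul_eq_mul, LinearMap.id_apply] at hψ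
  calc Paper.dualAct k C (Coalgebra.comul (R := k)) (Paper.conv k C f g) c
      = ∑ i ∈ (ℛ k c).index, ∑ j ∈ (ℛ k ((ℛ k c).right i)).index,
          (f ((ℛ k ((ℛ k c).right i)).left j) * g ((ℛ k ((ℛ k c).right i)).right j)) •
            (ℛ k c).left i := by
        rw [dualAct_repr _ _ (ℛ k c)]
        refine Finset.sum_congr rfl fun i _ => ?_
        rw [conv_repr _ _ _ (ℛ k ((ℛ k c).right i)), Finset.sum_smul]
    _ = ∑ i ∈ (ℛ k c).index, ∑ j ∈ (ℛ k ((ℛ k c).left i)).index,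
          (f ((ℛ k ((ℛ k c).left i)).right j) * g ((ℛ k c).right i)) •
            (ℛ k ((ℛ k c).left i)).left j := hψ.symm
    _ = Paper.dualAct k C (Coalgebra.comul (R := k)) f
          (Paper.dualAct k C (Coalgebra.comul (R := k)) g c) := by
        rw [dualAct_repr g _ (ℛ k c), map_sum]
        refine Finset.sum_congr rfl fun i _ => ?_
        rw [map_smul, dualAct_repr f _ (ℛ k ((ℛ k c).left i)), Finset.smul_sum]
        refine Finset.sum_congr rfl fun j _ => ?_
        rw [smul_smul, mul_comm]

end Aux2

section Aux3
open Coalgebra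
variable {k : Type} [Field k] {C : Type} [AddCommGroup C] [Module k C] [Coalgebra k C]

/-- `f ↦ f ⇀ q` as a linear map `C* →ₗ C`. -/
def piQ (q : C) : Module.Dual k C →ₗ[k] C where
  toFun f := Paper.dualAct k C (Coalgebra.comul (R := k)) f q
  map_add' f g := by
    simp [dualAct_repr _ q (ℛ k q), add_smul, Finset.sum_add_distrib]
  map_smul' a f := by
    simp [dualAct_repr _ q (ℛ k q), smul_smul, Finset.smul_sum]

/-- Right convolution by `x` as a linear map `C* →ₗ C*`. -/
def convR (x : Module.Dual k C) : Module.Dual k C →ₗ[k] Module.Dual k C where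
  toFun f := Paper.conv k C f x
  map_add' f g := conv_add_left f g x
  map_smul' a f := conv_smul_left a f x

lemma piQ_finrange (q : C) : FiniteDimensional k (LinearMap.range (piQ (k := k) q)) := by
  have hle : LinearMap.range (piQ (k := k) q) ≤
      Submodule.span k ((ℛ k q).left '' (ℛ k q).index) := by
    rintro _ ⟨f, rfl⟩
    show Paper.dualAct k C (Coalgebra.comul (R := k)) f q ∈ _
    rw [dualAct_repr _ q (ℛ k q)]
    exact Submodule.sum_mem _ fun i hi => Submodule.smul_mem _ _
      (Submodule.subset_span ⟨i, hi, rfl⟩)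
  haveI := FiniteDimensional.span_of_finite k
    (Set.Finite.image (ℛ k q).left (ℛ k q).index.finite_toSet)
  exact Submodule.finiteDimensional_of_le hle

end Aux3

/-- Let `q ∈ C` and `I = {f ∈ C* : f ⇀ q = 0}`. If `I` is the left
annihilator `l(X) = {f : ∀ x ∈ X, f * x = 0}` of some subset `X ⊆ C*`, then the cyclic left
`C*`-module generated by `q` (the right coideal of `C` generated by `q`, namely the span of
`{f ⇀ q}`) embeds in a free left `C*`-module of finite rank. -/
theorem stmt17 (k : Type) [Field k] (C : Type) [AddCommGroup C] [Module k C] [Coalgebra k C]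
    (q : C)
    (h : ∃ X : Set (Module.Dual k C),
      {f : Module.Dual k C | Paper.dualAct k C (Coalgebra.comul (R := k)) f q = 0} =
      {f : Module.Dual k C | ∀ x ∈ X, Paper.conv k C f x = 0}) :
    ∃ (n : ℕ)
      (Φ : Submodule.span k
          (Set.range fun f : Module.Dual k C =>
            Paper.dualAct k C (Coalgebra.comul (R := k)) f q) →ₗ[k]
        (Fin n → Module.Dual k C)),
      Function.Injective Φ ∧
      ∀ (f : Module.Dual k C) (x : C)
        (hx : x ∈ Submodule.span k (Set.range fun g : Module.Dual k C =>
          Paper.dualAct k C (Coalgebra.comul (R := k)) g q))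
        (hfx : Paper.dualAct k C (Coalgebra.comul (R := k)) f x ∈
          Submodule.span k (Set.range fun g : Module.Dual k C =>
            Paper.dualAct k C (Coalgebra.comul (R := k)) g q))
        (i : Fin n),
        Φ ⟨Paper.dualAct k C (Coalgebra.comul (R := k)) f x, hfx⟩ i =
          Paper.conv k C f (Φ ⟨x, hx⟩ i) := by
  classical
  obtain ⟨X, hX⟩ := h
  have hspan : Submodule.span k
      (Set.range fun f : Module.Dual k C =>
        Paper.dualAct k C (Coalgebra.comul (R := k)) f q)
      = LinearMap.range (piQ (k := k) q) := by
    have : (Set.range fun f : Module.Dual k C =>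
        Paper.dualAct k C (Coalgebra.comul (R := k)) f q)
        = ↑(LinearMap.range (piQ (k := k) q)) := by
      rw [LinearMap.coe_range]; rfl
    rw [this, Submodule.span_eq]
  rw [hspan]
  have hker : ∀ f : Module.Dual k C,
      piQ (k := k) q f = 0 ↔ ∀ x ∈ X, Paper.conv k C f x = 0 := by
    intro f
    have := Set.ext_iff.mp hX f
    exact this
  haveI : FiniteDimensional k (LinearMap.range (piQ (k := k) q)) := piQ_finrange q
  have hle : ∀ x : ↥X, LinearMap.ker (piQ (k := k) q) ≤ LinearMap.ker (convR (x : Module.Dual k C)) := by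
    intro x f hf
    rw [LinearMap.mem_ker] at hf ⊢
    exact (hker f).mp hf x x.2
  set Np := LinearMap.range (piQ (k := k) q) with hNp
  let T : ↥X → (↥Np →ₗ[k] Module.Dual k C) := fun x =>
    (Submodule.liftQ (LinearMap.ker (piQ (k := k) q)) (convR (x : Module.Dual k C)) (hle x)) ∘ₗ
      ((piQ (k := k) q).quotKerEquivRange.symm : ↥Np →ₗ[k] _)
  have hT : ∀ (x : ↥X) (g : Module.Dual k C) (hg : piQ (k := k) q g ∈ Np),
      T x ⟨piQ (k := k) q g, hg⟩ = Paper.conv k C g (x : Module.Dual k C) := by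
    intro x g hg
    show Submodule.liftQ (LinearMap.ker (piQ (k := k) q)) (convR (x : Module.Dual k C)) (hle x)
        ((piQ (k := k) q).quotKerEquivRange.symm ⟨piQ (k := k) q g, hg⟩) = _
    rw [LinearMap.quotKerEquivRange_symm_apply_image, Submodule.mkQ_apply, Submodule.liftQ_apply]
    rfl
  have hzero : ∀ n : ↥Np, (∀ x : ↥X, T x n = 0) → n = 0 := by
    intro n hn
    obtain ⟨g, hg⟩ := n.2
    have hn' : n = ⟨piQ (k := k) q g, LinearMap.mem_range_self _ g⟩ := Subtype.ext hg.symm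
    have hall : ∀ x ∈ X, Paper.conv k C g x = 0 := by
      intro x hxX
      have := hn ⟨x, hxX⟩
      rw [hn', hT] at this
      exact this
    have : piQ (k := k) q g = 0 := (hker g).mpr hall
    rw [hn']
    exact Subtype.ext this
  let P : Finset ↥X → Submodule k ↥Np := fun s => s.inf fun x => LinearMap.ker (T x)
  have hex : ∃ n, ∃ s : Finset ↥X, Module.finrank k (P s) = n := ⟨_, ∅, rfl⟩
  obtain ⟨s, hs⟩ := Nat.find_spec hex
  have hPs : P s = ⊥ := by
    by_contra hne
    obtain ⟨n, hnP, hn0⟩ := Submodule.exists_mem_ne_zero_of_ne_bot hne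
    have hxex : ¬ ∀ x : ↥X, T x n = 0 := fun hall => hn0 (hzero n hall)
    push_neg at hxex
    obtain ⟨x, hx⟩ := hxex
    have hlt : P (insert x s) < P s := by
      have hins : P (insert x s) = LinearMap.ker (T x) ⊓ P s := Finset.inf_insert
      rw [hins]
      refine lt_of_le_of_ne inf_le_right fun heq => hx ?_
      rw [← heq] at hnP
      exact hnP.1
    have hfr : Module.finrank k (P (insert x s)) < Nat.find hex := by
      rw [← hs]
      exact Submodule.finrank_lt_finrank_of_lt hlt
    exact Nat.find_min hex hfr ⟨insert x s, rfl⟩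
  let xi : Fin s.card → ↥X := fun i => (s.equivFin.symm i : ↥X)
  refine ⟨s.card, LinearMap.pi (fun i => T (xi i)), ?_, ?_⟩
  · rw [← LinearMap.ker_eq_bot, eq_bot_iff]
    intro n hn
    rw [LinearMap.mem_ker] at hn
    have hmem : n ∈ P s := by
      rw [Submodule.mem_finsetInf]
      intro x hxs
      rw [LinearMap.mem_ker]
      have : xi (s.equivFin ⟨x, hxs⟩) = x := by
        simp [xi]
      rw [← this]
      exact congrFun hn (s.equivFin ⟨x, hxs⟩)
    rw [hPs] at hmem
    exact hmem
  · intro f x hx hfx i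
    obtain ⟨g, rfl⟩ := hx
    have h2 : Paper.dualAct k C (Coalgebra.comul (R := k)) f (piQ (k := k) q g)
        = piQ (k := k) q (Paper.conv k C f g) := (dualAct_conv f g q).symm
    have hsub : (⟨Paper.dualAct k C (Coalgebra.comul (R := k)) f (piQ (k := k) q g), hfx⟩ : ↥Np)
        = ⟨piQ (k := k) q (Paper.conv k C f g), LinearMap.mem_range_self _ _⟩ := Subtype.ext h2
    rw [hsub, LinearMap.pi_apply, LinearMap.pi_apply, hT, conv_assoc]
    exact congrArg _ (hT _ _ _).symm
end
end

section
/- A finite direct sum (coproduct) of left quasi-coFrobenius coalgebras is left quasi-coFrobenius. -/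
open TensorProduct

noncomputable section
section Aux
variable (k : Type) [Field k] (ι : Type) [Fintype ι] [DecidableEq ι]
    (A : ι → Type) [∀ i, AddCommGroup (A i)] [∀ i, Module k (A i)] [∀ i, Coalgebra k (A i)]

local notation "D" => (Π₀ i, A i)

/-- restriction of functionals -/
abbrev resD (i : ι) (f : Module.Dual k D) : Module.Dual k (A i) := f ∘ₗ DFinsupp.lsingle i
/-- extension of functionals -/
abbrev extD (i : ι) (g : Module.Dual k (A i)) : Module.Dual k D := g ∘ₗ DFinsupp.lapply i

lemma extD_inj (i : ι) : Function.Injective (extD k ι A i) := by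
  intro g g' h
  ext a
  have := LinearMap.congr_fun h (DFinsupp.single i a)
  simpa using this

lemma dualAct_single (i : ι) (f : Module.Dual k D) (a : A i) :
    Paper.dualAct k D (Coalgebra.comul) f (DFinsupp.single i a)
      = DFinsupp.single i (Paper.dualAct k (A i) (Coalgebra.comul) (resD k ι A i f) a) := by
  have h1 : (TensorProduct.rid k D).toLinearMap ∘ₗ
        TensorProduct.map LinearMap.id f ∘ₗ
        TensorProduct.map (DFinsupp.lsingle i) (DFinsupp.lsingle i)
      = (DFinsupp.lsingle i : A i →ₗ[k] D) ∘ₗ (TensorProduct.rid k (A i)).toLinearMap ∘ₗ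
        TensorProduct.map LinearMap.id (f ∘ₗ DFinsupp.lsingle i) := by
    apply TensorProduct.ext'
    intro x y
    simp
  simp only [Paper.dualAct, LinearMap.comp_apply, DFinsupp.comul_single]
  exact LinearMap.congr_fun h1 (Coalgebra.comul a)

lemma lapply_dualAct (i : ι) (f : Module.Dual k D) :
    (DFinsupp.lapply i : D →ₗ[k] A i) ∘ₗ Paper.dualAct k D Coalgebra.comul f
      = Paper.dualAct k (A i) Coalgebra.comul (resD k ι A i f) ∘ₗ DFinsupp.lapply i := by
  apply DFinsupp.lhom_ext
  intro i' a
  simp only [LinearMap.comp_apply, DFinsupp.lapply_apply, dualAct_single]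
  by_cases h : i' = i
  · subst h; simp
  · simp [DFinsupp.single_eq_of_ne (Ne.symm h)]

lemma conv_extD (i : ι) (f : Module.Dual k D) (g : Module.Dual k (A i)) :
    Paper.conv k D f (extD k ι A i g)
      = extD k ι A i (Paper.conv k (A i) (resD k ι A i f) g) := by
  apply DFinsupp.lhom_ext (N := k)
  intro i' a
  simp only [Paper.conv, LinearMap.comp_apply, DFinsupp.comul_single, DFinsupp.lapply_apply]
  rw [← LinearMap.comp_apply (TensorProduct.map f _), ← TensorProduct.map_comp]
  by_cases h : i' = i
  · subst h
    have hg : (extD k ι A i' g) ∘ₗ (DFinsupp.lsingle i' : A i' →ₗ[k] D) = g := by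
      ext b; simp
    rw [hg]
    simp [Paper.conv]
  · have hz : (extD k ι A i g) ∘ₗ (DFinsupp.lsingle i' : A i' →ₗ[k] D) = 0 := by
      ext b
      simp [DFinsupp.single_eq_of_ne (Ne.symm h)]
    rw [hz]
    simp [DFinsupp.single_eq_of_ne (Ne.symm h)]

end Aux

/-- A finite direct sum (coproduct) of left quasi-coFrobenius coalgebras is
left quasi-coFrobenius. -/
theorem stmt19 (k : Type) [Field k] (ι : Type) [Fintype ι] [DecidableEq ι]
    (A : ι → Type) [∀ i, AddCommGroup (A i)] [∀ i, Module k (A i)] [∀ i, Coalgebra k (A i)]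
    (h : ∀ i, Paper.LeftQcF k (A i)) :
    Paper.LeftQcF k (Π₀ i, A i) := by
  classical
  unfold Paper.LeftQcF Paper.EmbedsInFree at *
  choose I Φ hinj hcomp using h
  set Ψ : (Π₀ i, A i) →ₗ[k] ((Σ i, I i) →₀ Module.Dual k (Π₀ i, A i)) :=
    ∑ i : ι, Finsupp.lmapDomain (Module.Dual k (Π₀ i, A i)) k (Sigma.mk i) ∘ₗ
      Finsupp.mapRange.linearMap (LinearMap.lcomp k k (DFinsupp.lapply i)) ∘ₗ
      Φ i ∘ₗ DFinsupp.lapply i with hΨ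
  have hval : ∀ (c : Π₀ i, A i) (i : ι) (j : I i),
      Ψ c ⟨i, j⟩ = extD k ι A i (Φ i (c i) j) := by
    intro c i j
    rw [hΨ]
    simp only [LinearMap.sum_apply, LinearMap.comp_apply, Finsupp.lmapDomain_apply,
      Finsupp.mapRange.linearMap_apply, DFinsupp.lapply_apply]
    rw [Finsupp.finset_sum_apply]
    rw [Finset.sum_eq_single i]
    · rw [Finsupp.mapDomain_apply sigma_mk_injective, Finsupp.mapRange_apply]
      rfl
    · intro i' _ hne
      apply Finsupp.mapDomain_notin_range
      rintro ⟨j', hj⟩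
      exact hne (congrArg Sigma.fst hj)
    · intro hni
      exact absurd (Finset.mem_univ i) hni
  refine ⟨Σ i, I i, Ψ, ?_, ?_⟩
  · intro c c' hcc'
    have hz : Ψ (c - c') = 0 := by rw [map_sub, hcc', sub_self]
    have : c - c' = 0 := by
      ext i
      have h0 : Φ i ((c - c') i) = 0 := by
        apply Finsupp.ext
        intro j
        have hv := hval (c - c') i j
        rw [hz] at hv
        simp only [Finsupp.coe_zero, Pi.zero_apply] at hv
        have h2 : extD k ι A i (((Φ i) ((c - c') i)) j) = extD k ι A i 0 := by
          rw [show (extD k ι A i 0 : Module.Dual k (Π₀ i, A i)) = 0 from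
            LinearMap.zero_comp _]
          exact hv.symm
        have := extD_inj k ι A i h2
        simpa using this
      have := hinj i (h0.trans (map_zero (Φ i)).symm)
      simp [this]
    rw [sub_eq_zero] at this
    exact this
  · intro f m ⟨i, j⟩
    rw [hval, hval]
    have h1 : (Paper.dualAct k (Π₀ i, A i) Coalgebra.comul f m) i
        = Paper.dualAct k (A i) Coalgebra.comul (resD k ι A i f) (m i) := by
      have := LinearMap.congr_fun (lapply_dualAct k ι A i f) m
      simpa using this
    rw [h1, hcomp i (resD k ι A i f) (m i) j, conv_extD]
end
end
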